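/- arXiv:1611.04157 — 3 statements merged into one kernel-verified Lean document; each statement's English description precedes it below -/
import Mathlib

section
/- Given pointed spaces X, Y and maps d : X → Y, s : Y → X with s ∘ d = id_X, the homotopy fiber of d (over the basepoint) is weakly equivalent to the loop space of the homotopy fiber of s. -/
/-!
STATEMENT 2: Given pointed spaces X, Y and maps d : X → Y, s : Y → X with
s ∘ d = id_X, the homotopy fiber of d (over the basepoint) is weakly equivalent
to the loop space of the homotopy fiber of s.
-/

noncomputable section

open scoped Topology unitInterval

/-- The map induced by a continuous map on `n`-th homotopy groups. -/
def piMap (n : ℕ) {X Y : Type*} [TopologicalSpace X] [TopologicalSpace Y]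
    (f : C(X, Y)) (x : X) : HomotopyGroup.Pi n X x → HomotopyGroup.Pi n Y (f x) :=
  Quotient.map' (fun g => ⟨f.comp g.1, fun y hy => by
      simp [ContinuousMap.comp_apply, g.2 y hy]⟩)
    (fun g h H => H.map fun F => F.compContinuousMap f)

/-- `(X, x)` is weakly equivalent to `(Y, y)`: there is a pointed map inducing
bijections on all homotopy groups. -/
def WeaklyEquivalentTo (X : Type*) [TopologicalSpace X] (x : X)
    (Y : Type*) [TopologicalSpace Y] (y : Y) : Prop :=
  ∃ f : C(X, Y), f x = y ∧ ∀ n : ℕ, Function.Bijective (piMap n f x)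

/-- The homotopy fiber of `f` over `y0`: pairs of a point `x` and a path from
`f x` to `y0`. -/
def HoFib {X Y : Type*} [TopologicalSpace X] [TopologicalSpace Y]
    (f : C(X, Y)) (y0 : Y) : Type _ :=
  {p : X × C(I, Y) // p.2 0 = f p.1 ∧ p.2 1 = y0}

instance {X Y : Type*} [TopologicalSpace X] [TopologicalSpace Y]
    (f : C(X, Y)) (y0 : Y) : TopologicalSpace (HoFib f y0) :=
  instTopologicalSpaceSubtype

/-- The canonical basepoint of the homotopy fiber of a pointed map. -/
def HoFib.pt {X Y : Type*} [TopologicalSpace X] [TopologicalSpace Y]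
    (f : C(X, Y)) {x0 : X} {y0 : Y} (hf : f x0 = y0) : HoFib f y0 :=
  ⟨(x0, ContinuousMap.const I y0), by simp [hf]⟩

namespace Stmt2Aux
open ContinuousMap

variable {A B : Type*} [TopologicalSpace A] [TopologicalSpace B]

/-- Precompose a based homotopy with a generalized loop. -/
def preHomotopy {f g : C(A, B)} {a : A} (H : f.HomotopyRel g {a}) {N : Type*}
    (α : C((N → I), A)) (hα : ∀ y ∈ Cube.boundary N, α y = a) :
    (f.comp α).HomotopyRel (g.comp α) (Cube.boundary N) where
  toHomotopy := H.toHomotopy.compContinuousMap α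
  prop' := fun t y hy => by
    show H.toHomotopy (t, α y) = f (α y)
    rw [hα y hy]
    exact H.eq_fst t rfl

theorem bijective_piMap (n : ℕ) (F : C(A, B)) (G : C(B, A)) (p : A)
    (H1 : (G.comp F).HomotopyRel (ContinuousMap.id A) {p})
    (H2 : (F.comp G).HomotopyRel (ContinuousMap.id B) {F p}) :
    Function.Bijective (piMap n F p) := by
  have hGFp : G (F p) = p := H1.fst_eq_snd rfl
  constructor
  · intro a b hab
    induction a using Quotient.inductionOn' with | h α =>
    induction b using Quotient.inductionOn' with | h β =>
    apply Quotient.sound'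
    have h1 : (F.comp α.1).HomotopicRel (F.comp β.1) (Cube.boundary (Fin n)) :=
      Quotient.exact' hab
    have h2 : ((G.comp F).comp α.1).HomotopicRel ((G.comp F).comp β.1)
        (Cube.boundary (Fin n)) := ⟨(h1.some.compContinuousMap G).cast
          (ContinuousMap.comp_assoc _ _ _).symm (ContinuousMap.comp_assoc _ _ _).symm⟩
    have hA : ((G.comp F).comp α.1).HomotopicRel α.1 (Cube.boundary (Fin n)) :=
      ⟨(preHomotopy H1 α.1 α.2).cast rfl (ContinuousMap.id_comp _)⟩
    have hB : ((G.comp F).comp β.1).HomotopicRel β.1 (Cube.boundary (Fin n)) :=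
      ⟨(preHomotopy H1 β.1 β.2).cast rfl (ContinuousMap.id_comp _)⟩
    exact (hA.symm.trans h2).trans hB
  · intro b
    induction b using Quotient.inductionOn' with | h β =>
    refine ⟨Quotient.mk'' ⟨G.comp β.1, fun y hy => ?_⟩, ?_⟩
    · show G (β.1 y) = p
      rw [β.2 y hy]
      exact hGFp
    · show piMap n F p (Quotient.mk'' _) = Quotient.mk'' β
      simp only [_root_.piMap]
      apply Quotient.sound'
      show (F.comp (G.comp β.1)).HomotopicRel β.1 (Cube.boundary (Fin n))
      exact ⟨((preHomotopy H2 β.1 β.2).cast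
        (ContinuousMap.comp_assoc _ _ _) (ContinuousMap.id_comp _))⟩



def pr (r : ℝ) : I := Set.projIcc 0 1 zero_le_one r
lemma pr_cont : Continuous pr := continuous_projIcc (h := zero_le_one)
@[simp] lemma pr_coe (t : I) : pr (t : ℝ) = t := by simp [pr]
@[simp] lemma pr_zero : pr 0 = 0 := by simp [pr]
@[simp] lemma pr_one : pr 1 = 1 := by simp [pr]

lemma contI : Continuous (fun t : I => (t : ℝ)) := continuous_subtype_val

section Main
variable {X Y : Type*} [TopologicalSpace X] [TopologicalSpace Y]
variable {x0 : X} {y0 : Y} {d : C(X, Y)} {s : C(Y, X)}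

/-- y-coordinate of a loop in `HoFib s x0`, with clamped real argument. -/
def yv (hs : s y0 = x0) (ℓ : Path (HoFib.pt s hs) (HoFib.pt s hs)) (r : ℝ) : Y :=
  (ℓ (pr r)).1.1

/-- δ-coordinate of a loop in `HoFib s x0`, with clamped real arguments. -/
def dv (hs : s y0 = x0) (ℓ : Path (HoFib.pt s hs) (HoFib.pt s hs)) (v w : ℝ) : X :=
  (ℓ (pr v)).1.2 (pr w)

variable (hd : d x0 = y0) (hs : s y0 = x0) (hret : ∀ x : X, s (d x) = x)

lemma cont_ev {Z : Type*} [TopologicalSpace Z]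
    {f : Z → Path (HoFib.pt s hs) (HoFib.pt s hs)} {g : Z → ℝ}
    (hf : Continuous f) (hg : Continuous g) :
    Continuous fun z => ((f z) (pr (g z)) : HoFib s x0) :=
  continuous_eval.comp (hf.prodMk (pr_cont.comp hg))

lemma cont_yv {Z : Type*} [TopologicalSpace Z]
    {f : Z → Path (HoFib.pt s hs) (HoFib.pt s hs)} {g : Z → ℝ}
    (hf : Continuous f) (hg : Continuous g) :
    Continuous fun z => yv hs (f z) (g z) :=
  continuous_fst.comp (continuous_subtype_val.comp (cont_ev hs hf hg))

lemma cont_dv {Z : Type*} [TopologicalSpace Z]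
    {f : Z → Path (HoFib.pt s hs) (HoFib.pt s hs)} {g h : Z → ℝ}
    (hf : Continuous f) (hg : Continuous g) (hh : Continuous h) :
    Continuous fun z => dv hs (f z) (g z) (h z) :=
  continuous_eval.comp
    ((continuous_snd.comp (continuous_subtype_val.comp (cont_ev hs hf hg))).prodMk
      (pr_cont.comp hh))

lemma cont_gv {Z : Type*} [TopologicalSpace Z] {f : Z → C(I, Y)} {g : Z → ℝ}
    (hf : Continuous f) (hg : Continuous g) :
    Continuous fun z => f z (pr (g z)) :=
  continuous_eval.comp (hf.prodMk (pr_cont.comp hg))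

lemma cont_ga {Z : Type*} [TopologicalSpace Z] {f : Z → HoFib d y0}
    (hf : Continuous f) : Continuous fun z => (f z).1.2 :=
  continuous_snd.comp (continuous_subtype_val.comp hf)

/-- basepoint values -/
@[simp] lemma loop_zero (ℓ : Path (HoFib.pt s hs) (HoFib.pt s hs)) :
    ℓ 0 = HoFib.pt s hs := ℓ.source
@[simp] lemma loop_one (ℓ : Path (HoFib.pt s hs) (HoFib.pt s hs)) :
    ℓ 1 = HoFib.pt s hs := ℓ.target
@[simp] lemma pt_fst : (HoFib.pt s hs).1.1 = y0 := rfl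
@[simp] lemma pt_snd (u : I) : (HoFib.pt s hs).1.2 u = x0 := rfl

lemma mem_dzero (w : HoFib s x0) : w.1.2 0 = s w.1.1 := w.2.1
lemma mem_done (w : HoFib s x0) : w.1.2 1 = x0 := w.2.2

lemma dv_zero (ℓ : Path (HoFib.pt s hs) (HoFib.pt s hs)) (v : ℝ) :
    dv hs ℓ v 0 = s (yv hs ℓ v) := by
  simp only [dv, yv, pr_zero]
  exact (ℓ (pr v)).2.1

lemma dv_one (ℓ : Path (HoFib.pt s hs) (HoFib.pt s hs)) (v : ℝ) :
    dv hs ℓ v 1 = x0 := by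
  simp only [dv, pr_one]
  exact (ℓ (pr v)).2.2

lemma dv_left (ℓ : Path (HoFib.pt s hs) (HoFib.pt s hs)) (w : ℝ) :
    dv hs ℓ 0 w = x0 := by simp [dv]

lemma dv_right (ℓ : Path (HoFib.pt s hs) (HoFib.pt s hs)) (w : ℝ) :
    dv hs ℓ 1 w = x0 := by simp [dv]

lemma yv_zero (ℓ : Path (HoFib.pt s hs) (HoFib.pt s hs)) : yv hs ℓ 0 = y0 := by simp [yv]
lemma yv_one (ℓ : Path (HoFib.pt s hs) (HoFib.pt s hs)) : yv hs ℓ 1 = y0 := by simp [yv]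

/-- The map `F : HoFib d → Ω HoFib s`, pointwise. -/
def Fpt (z : HoFib d y0) (t : I) : HoFib s x0 :=
  ⟨( (if (t:ℝ) ≤ 1/2 then d (s (z.1.2 (pr (1-2*t)))) else z.1.2 (pr (2*t-1))),
     ⟨fun u => s (z.1.2 (pr ((1-(u:ℝ))*|1-2*(t:ℝ)| + u))), by
        exact s.continuous.comp (cont_gv continuous_const
          (((continuous_const.sub contI).mul continuous_const).add contI))⟩ ), by
    constructor
    · show s (z.1.2 (pr ((1-((0:I):ℝ))*|1-2*(t:ℝ)| + ((0:I):ℝ)))) = _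
      norm_num
      split_ifs with h
      · rw [abs_of_nonneg (by linarith)]
        exact (hret _).symm
      · rw [abs_of_nonpos (by linarith), show -(1-2*(t:ℝ)) = 2*t-1 by ring]
    · show s (z.1.2 (pr ((1-((1:I):ℝ))*|1-2*(t:ℝ)| + ((1:I):ℝ)))) = x0
      norm_num
      rw [z.2.2, hs]⟩

/-- `F` as a path. -/
def Fm (z : HoFib d y0) : Path (HoFib.pt s hs) (HoFib.pt s hs) where
  toFun := fun t => Fpt hs hret z t
  continuous_toFun := by
    apply Continuous.subtype_mk
    apply Continuous.prodMk
    · apply Continuous.if_le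
      · exact d.continuous.comp (s.continuous.comp (cont_gv (continuous_const)
          (continuous_const.sub (continuous_const.mul contI))))
      · exact cont_gv continuous_const ((continuous_const.mul contI).sub continuous_const)
      · exact contI
      · exact continuous_const
      · intro t ht
        have h1 : (1:ℝ)-2*t = 0 := by rw [ht]; ring
        have h2 : 2*(t:ℝ)-1 = 0 := by rw [ht]; ring
        rw [h1, h2, pr_zero, z.2.1, hret]
    · apply ContinuousMap.continuous_of_continuous_uncurry
      exact s.continuous.comp (cont_gv continuous_const
        ((((continuous_const.sub (contI.comp continuous_snd)).mul
          ((continuous_const.sub (continuous_const.mul (contI.comp continuous_fst))).abs)).add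
            (contI.comp continuous_snd))))
  source' := by
    apply Subtype.ext
    apply Prod.ext
    · show (if ((0:I):ℝ) ≤ 1/2 then d (s (z.1.2 (pr (1-2*((0:I):ℝ))))) else _) = y0
      norm_num
      rw [z.2.2, hs, hd]
    · apply ContinuousMap.ext; intro u
      show s (z.1.2 (pr ((1-(u:ℝ))*|1-2*((0:I):ℝ)| + u))) = x0
      norm_num
      rw [z.2.2, hs]
  target' := by
    apply Subtype.ext
    apply Prod.ext
    · show (if ((1:I):ℝ) ≤ 1/2 then _ else z.1.2 (pr (2*((1:I):ℝ)-1))) = y0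
      norm_num
      exact z.2.2
    · apply ContinuousMap.ext; intro u
      show s (z.1.2 (pr ((1-(u:ℝ))*|1-2*((1:I):ℝ)| + u))) = x0
      norm_num
      rw [z.2.2, hs]

/-- `F` as a continuous map. -/
def FC : C(HoFib d y0, Path (HoFib.pt s hs) (HoFib.pt s hs)) where
  toFun := Fm hd hs hret
  continuous_toFun := by
    rw [← Path.continuous_uncurry_iff]
    apply Continuous.subtype_mk
    apply Continuous.prodMk
    · apply Continuous.if_le
      · exact d.continuous.comp (s.continuous.comp (cont_gv (cont_ga continuous_fst)
          (continuous_const.sub (continuous_const.mul (contI.comp continuous_snd)))))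
      · exact cont_gv (cont_ga continuous_fst)
          ((continuous_const.mul (contI.comp continuous_snd)).sub continuous_const)
      · exact contI.comp continuous_snd
      · exact continuous_const
      · intro p hp
        have h1 : (1:ℝ)-2*(p.2:ℝ) = 0 := by rw [hp]; ring
        have h2 : 2*(p.2:ℝ)-1 = 0 := by rw [hp]; ring
        rw [h1, h2, pr_zero, p.1.2.1, hret]
    · apply ContinuousMap.continuous_of_continuous_uncurry
      exact s.continuous.comp (cont_gv (cont_ga (continuous_fst.comp continuous_fst))
        ((((continuous_const.sub (contI.comp continuous_snd)).mul
          ((continuous_const.sub (continuous_const.mul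
            (contI.comp (continuous_snd.comp continuous_fst)))).abs)).add
              (contI.comp continuous_snd))))

/-- `G : Ω HoFib s → HoFib d`. -/
def Gm (ℓ : Path (HoFib.pt s hs) (HoFib.pt s hs)) : HoFib d y0 :=
  ⟨(x0, ⟨fun t => (ℓ t).1.1, by
      exact continuous_fst.comp (continuous_subtype_val.comp
        (continuous_eval.comp ((continuous_const (y := ℓ)).prodMk continuous_id)))⟩), by
    refine ⟨?_, ?_⟩
    · show (ℓ 0).1.1 = d x0
      rw [ℓ.source, hd]; rfl
    · show (ℓ 1).1.1 = y0
      rw [ℓ.target]; rfl⟩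

def GC : C(Path (HoFib.pt s hs) (HoFib.pt s hs), HoFib d y0) where
  toFun := Gm hd hs
  continuous_toFun := by
    apply Continuous.subtype_mk
    apply Continuous.prodMk
    · exact continuous_const
    · apply ContinuousMap.continuous_of_continuous_uncurry
      exact continuous_fst.comp (continuous_subtype_val.comp
        (continuous_eval.comp (continuous_fst.prodMk continuous_snd)))

lemma F_basept : Fm hd hs hret (HoFib.pt d hd) = Path.refl (HoFib.pt s hs) := by
  apply Path.ext
  funext t
  apply Subtype.ext
  apply Prod.ext
  · show (if (t:ℝ) ≤ 1/2 then d (s ((HoFib.pt d hd).1.2 _)) else (HoFib.pt d hd).1.2 _) = y0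
    split_ifs
    · show d (s y0) = y0
      rw [hs, hd]
    · rfl
  · apply ContinuousMap.ext; intro u
    show s ((HoFib.pt d hd).1.2 _) = x0
    exact hs


/-- The homotopy `G ∘ F ≃ id` on `HoFib d`, pointwise. -/
def H1pt (τ : I) (z : HoFib d y0) : HoFib d y0 :=
  ⟨( s (z.1.2 (pr (1-τ))),
     ⟨fun t => if (t:ℝ) ≤ (1-τ)/2 then d (s (z.1.2 (pr ((1-τ) - 2*t))))
               else z.1.2 (pr ((2*t-1+τ)/(1+τ))), by
        apply Continuous.if_le
        · exact d.continuous.comp (s.continuous.comp (cont_gv continuous_const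
            (continuous_const.sub (continuous_const.mul contI))))
        · exact cont_gv continuous_const
            (((continuous_const.mul contI).sub continuous_const).add continuous_const |>.div
              continuous_const (fun x => by have h := τ.2.1; positivity))
        · exact contI
        · exact continuous_const
        · intro t ht
          have h1 : (1-(τ:ℝ)) - 2*t = 0 := by rw [ht]; ring
          have h2 : (2*(t:ℝ)-1+τ)/(1+τ) = 0 := by
            rw [ht]; field_simp; ring
          rw [h1, h2, pr_zero, z.2.1, hret]⟩ ), by
    constructor
    · show (if ((0:I):ℝ) ≤ (1-(τ:ℝ))/2 then d (s (z.1.2 (pr ((1-(τ:ℝ)) - 2*((0:I):ℝ)))))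
        else _) = d (s (z.1.2 (pr (1-τ))))
      rw [if_pos (by have := τ.2.2; norm_num; linarith)]
      norm_num
    · show (if ((1:I):ℝ) ≤ (1-(τ:ℝ))/2 then _ else z.1.2 (pr ((2*((1:I):ℝ)-1+τ)/(1+τ)))) = y0
      rw [if_neg (by norm_num; nlinarith [τ.2.1, τ.2.2])]
      have : (2*((1:I):ℝ)-1+τ)/(1+τ) = 1 := by
        have h1 := τ.2.1
        norm_num
        exact (by positivity : (1:ℝ) + (τ:ℝ) ≠ 0)
      rw [this, pr_one, z.2.2]⟩

def H1 : ((GC hd hs).comp (FC hd hs hret)).HomotopyRel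
    (ContinuousMap.id (HoFib d y0)) {HoFib.pt d hd} where
  toFun := fun p => H1pt hret p.1 p.2
  continuous_toFun := by
    apply Continuous.subtype_mk
    apply Continuous.prodMk
    · exact s.continuous.comp (cont_gv (cont_ga continuous_snd)
        (continuous_const.sub (contI.comp continuous_fst)))
    · apply ContinuousMap.continuous_of_continuous_uncurry
      apply Continuous.if_le
      · exact d.continuous.comp (s.continuous.comp
          (cont_gv (cont_ga (continuous_snd.comp continuous_fst))
            ((continuous_const.sub (contI.comp (continuous_fst.comp continuous_fst))).sub
              (continuous_const.mul (contI.comp continuous_snd)))))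
      · exact cont_gv (cont_ga (continuous_snd.comp continuous_fst))
          ((((continuous_const.mul (contI.comp continuous_snd)).sub continuous_const).add
            (contI.comp (continuous_fst.comp continuous_fst))).div
              (continuous_const.add (contI.comp (continuous_fst.comp continuous_fst)))
              (fun p => by have := (p.1.1 : I).2.1; positivity))
      · exact contI.comp continuous_snd
      · exact (continuous_const.sub (contI.comp (continuous_fst.comp continuous_fst))).div
          continuous_const (by norm_num)
      · intro p hp
        have h1 : (1-((p.1.1:I):ℝ)) - 2*(p.2:ℝ) = 0 := by rw [hp]; ring
        have h2 : (2*(p.2:ℝ)-1+p.1.1)/(1+(p.1.1:ℝ)) = 0 := by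
          rw [hp]
          have : (1:ℝ)+(p.1.1:ℝ) > 0 := by have := (p.1.1 : I).2.1; positivity
          field_simp
          ring
        rw [h1, h2, pr_zero, p.1.2.2.1, hret]
  map_zero_left := by
    intro z
    apply Subtype.ext
    apply Prod.ext
    · show s (z.1.2 (pr (1-((0:I):ℝ)))) = _
      norm_num
      rw [z.2.2, hs]
      rfl
    · apply ContinuousMap.ext; intro t
      show (if (t:ℝ) ≤ (1-((0:I):ℝ))/2 then d (s (z.1.2 (pr ((1-((0:I):ℝ)) - 2*t))))
          else z.1.2 (pr ((2*t-1+((0:I):ℝ))/(1+((0:I):ℝ))))) = _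
      show _ = (if (t:ℝ) ≤ 1/2 then d (s (z.1.2 (pr (1-2*t)))) else z.1.2 (pr (2*t-1)))
      norm_num
  map_one_left := by
    intro z
    apply Subtype.ext
    apply Prod.ext
    · show s (z.1.2 (pr (1-((1:I):ℝ)))) = z.1.1
      norm_num
      rw [z.2.1, hret]
    · apply ContinuousMap.ext; intro t
      show (if (t:ℝ) ≤ (1-((1:I):ℝ))/2 then d (s (z.1.2 (pr ((1-((1:I):ℝ)) - 2*t))))
          else z.1.2 (pr ((2*t-1+((1:I):ℝ))/(1+((1:I):ℝ))))) = z.1.2 t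
      have hc : ((1:I):ℝ) = 1 := by norm_num
      split_ifs with h
      · have ht : (t:ℝ) = 0 := by rw [hc] at h; norm_num at h; exact le_antisymm h t.2.1
        have harg : (1-((1:I):ℝ)) - 2*(t:ℝ) = 0 := by rw [hc, ht]; ring
        rw [harg, pr_zero, z.2.1, hret, ← z.2.1]
        congr 1
        exact (Subtype.ext ht).symm
      · have harg : (2*(t:ℝ)-1+((1:I):ℝ))/(1+((1:I):ℝ)) = t := by rw [hc]; ring
        rw [harg, pr_coe]
  prop' := by
    intro τ z hz
    simp only [Set.mem_singleton_iff] at hz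
    subst hz
    show H1pt hret τ (HoFib.pt d hd) = (Gm hd hs) (Fm hd hs hret (HoFib.pt d hd))
    rw [F_basept]
    have hG : (Gm hd hs) (Path.refl (HoFib.pt s hs)) = HoFib.pt d hd := by
      apply Subtype.ext
      apply Prod.ext
      · rfl
      · apply ContinuousMap.ext; intro t; rfl
    rw [hG]
    apply Subtype.ext
    apply Prod.ext
    · show s ((HoFib.pt d hd).1.2 _) = x0
      exact hs
    · apply ContinuousMap.ext; intro t
      show (if (t:ℝ) ≤ (1-(τ:ℝ))/2 then d (s ((HoFib.pt d hd).1.2 _))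
          else (HoFib.pt d hd).1.2 _) = y0
      split_ifs
      · show d (s y0) = y0
        rw [hs, hd]
      · rfl


/-! ### Square boundary parametrization and the unfolding homotopy -/

/-- Parametrization of the left-top-right part of the boundary of the square. -/
def Tp (ξ : ℝ) : ℝ × ℝ := if ξ ≤ 1 then (0, ξ) else if ξ ≤ 2 then (ξ-1, 1) else (1, 3-ξ)

lemma Tp_cont : Continuous Tp := by
  apply Continuous.if_le
  · exact continuous_const.prodMk continuous_id
  · apply Continuous.if_le
    · exact (continuous_id.sub continuous_const).prodMk continuous_const
    · exact continuous_const.prodMk (continuous_const.sub continuous_id)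
    · exact continuous_id
    · exact continuous_const
    · intro x hx; rw [hx]; norm_num
  · exact continuous_id
  · exact continuous_const
  · intro x hx; rw [hx]; norm_num

lemma Tp_three : Tp 3 = (1, 0) := by norm_num [Tp]
lemma Tp_zero : Tp 0 = (0, 0) := by norm_num [Tp]

lemma Tp_ge_two {ξ : ℝ} (h : 2 ≤ ξ) : Tp ξ = (1, 3-ξ) := by
  unfold Tp
  split_ifs with h1 h2
  · exact absurd h (by linarith)
  · have : ξ = 2 := le_antisymm h2 h
    subst this; norm_num
  · rfl

lemma Tp_onet (t : I) : Tp (1+(t:ℝ)) = ((t:ℝ), 1) := by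
  unfold Tp
  split_ifs with h1 h2
  · have h0 : (t:ℝ) = 0 := le_antisymm (by linarith) t.2.1
    rw [h0]; norm_num
  · norm_num
  · exact absurd (by linarith [t.2.2] : 1+(t:ℝ) ≤ 2) h2

/-- `dv` vanishes on the left-top-right boundary. -/
lemma dv_Tp (ℓ : Path (HoFib.pt s hs) (HoFib.pt s hs)) (ξ : ℝ) :
    dv hs ℓ (Tp ξ).1 (Tp ξ).2 = x0 := by
  unfold Tp
  split_ifs with h1 h2
  · exact dv_left hs ℓ ξ
  · exact dv_one hs ℓ (ξ-1)
  · exact dv_right hs ℓ (3-ξ)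

/-- The bottom path of the unfolding homotopy. -/
def Pf (τ t : ℝ) : ℝ × ℝ :=
  if t ≤ 1/2 then ((1-2*t)*(Tp (3-3*τ)).1, (1-2*t)*(Tp (3-3*τ)).2) else (2*t-1, 0)

/-- The top parameter of the unfolding homotopy. -/
def qf (τ t : ℝ) : ℝ := (1-t)*(max 1 (3-3*τ)) + t*(3-τ)

/-- The full square deformation. -/
def Ph (τ t u : ℝ) : ℝ × ℝ :=
  ((1-u)*(Pf τ t).1 + u*(Tp (qf τ t)).1, (1-u)*(Pf τ t).2 + u*(Tp (qf τ t)).2)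

lemma Pf_cont : Continuous fun p : ℝ × ℝ => Pf p.1 p.2 := by
  apply Continuous.if_le
  · apply Continuous.prodMk
    · exact (continuous_const.sub (continuous_const.mul continuous_snd)).mul
        ((Tp_cont.comp (continuous_const.sub (continuous_const.mul continuous_fst))).fst)
    · exact (continuous_const.sub (continuous_const.mul continuous_snd)).mul
        ((Tp_cont.comp (continuous_const.sub (continuous_const.mul continuous_fst))).snd)
  · exact ((continuous_const.mul continuous_snd).sub continuous_const).prodMk continuous_const
  · exact continuous_snd
  · exact continuous_const
  · intro x hx; rw [hx]; norm_num

lemma qf_cont : Continuous fun p : ℝ × ℝ => qf p.1 p.2 :=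
  ((continuous_const.sub continuous_snd).mul
    (continuous_const.max (continuous_const.sub (continuous_const.mul continuous_fst)))).add
      (continuous_snd.mul (continuous_const.sub continuous_fst))

lemma Ph_cont : Continuous fun p : (ℝ × ℝ) × ℝ => Ph p.1.1 p.1.2 p.2 := by
  have hP : Continuous fun p : (ℝ × ℝ) × ℝ => Pf p.1.1 p.1.2 := Pf_cont.comp continuous_fst
  have hQ : Continuous fun p : (ℝ × ℝ) × ℝ => Tp (qf p.1.1 p.1.2) :=
    Tp_cont.comp (qf_cont.comp continuous_fst)
  exact (((continuous_const.sub continuous_snd).mul hP.fst).add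
      (continuous_snd.mul hQ.fst)).prodMk
    (((continuous_const.sub continuous_snd).mul hP.snd).add (continuous_snd.mul hQ.snd))

lemma Ph_zero (τ t : ℝ) : Ph τ t 0 = Pf τ t := by simp [Ph]
lemma Ph_one (τ t : ℝ) : Ph τ t 1 = Tp (qf τ t) := by simp [Ph]

/-- Stage 1 of the homotopy `F ∘ G ≃ id`, pointwise in `HoFib s`. -/
def Kt (τ : I) (ℓ : Path (HoFib.pt s hs) (HoFib.pt s hs)) (t : I) : HoFib s x0 :=
  ⟨( (if (t:ℝ) ≤ 1/2 then d (dv hs ℓ (Pf τ t).1 (Pf τ t).2) else yv hs ℓ (2*t-1)),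
     ⟨fun u => dv hs ℓ (Ph τ t u).1 (Ph τ t u).2, by
        have h : Continuous fun u : I => Ph (τ:ℝ) (t:ℝ) (u:ℝ) :=
          Ph_cont.comp ((continuous_const.prodMk continuous_const).prodMk contI)
        exact cont_dv hs continuous_const h.fst h.snd⟩ ), by
    constructor
    · show dv hs ℓ (Ph τ t ((0:I):ℝ)).1 (Ph τ t ((0:I):ℝ)).2 = _
      rw [show ((0:I):ℝ) = 0 from rfl, Ph_zero]
      split_ifs with h
      · exact (hret _).symm
      · simp only [Pf, if_neg h]
        exact dv_zero hs ℓ _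
    · show dv hs ℓ (Ph τ t ((1:I):ℝ)).1 (Ph τ t ((1:I):ℝ)).2 = x0
      rw [show ((1:I):ℝ) = 1 from rfl, Ph_one]
      exact dv_Tp hs ℓ _⟩

/-- Stage 1 as a family of loops. -/
def Kpath (τ : I) (ℓ : Path (HoFib.pt s hs) (HoFib.pt s hs)) :
    Path (HoFib.pt s hs) (HoFib.pt s hs) where
  toFun := Kt hs hret τ ℓ
  continuous_toFun := by
    apply Continuous.subtype_mk
    apply Continuous.prodMk
    · apply Continuous.if_le
      · refine d.continuous.comp (cont_dv hs continuous_const ?_ ?_)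
        · exact (Pf_cont.comp (continuous_const.prodMk contI)).fst
        · exact (Pf_cont.comp (continuous_const.prodMk contI)).snd
      · exact cont_yv hs continuous_const ((continuous_const.mul contI).sub continuous_const)
      · exact contI
      · exact continuous_const
      · intro t ht
        have hP : Pf (τ:ℝ) (t:ℝ) = (0, 0) := by rw [ht]; norm_num [Pf]
        rw [hP, show (2*(t:ℝ)-1) = 0 by rw [ht]; ring, dv_left, yv_zero, hd]
    · apply ContinuousMap.continuous_of_continuous_uncurry
      have h : Continuous fun p : I × I => Ph (τ:ℝ) (p.1:ℝ) (p.2:ℝ) :=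
        Ph_cont.comp ((continuous_const.prodMk (contI.comp continuous_fst)).prodMk
          (contI.comp continuous_snd))
      exact cont_dv hs continuous_const h.fst h.snd
  source' := by
    apply Subtype.ext
    apply Prod.ext
    · show (if ((0:I):ℝ) ≤ 1/2 then d (dv hs ℓ (Pf τ ((0:I):ℝ)).1 (Pf τ ((0:I):ℝ)).2)
        else _) = y0
      rw [if_pos (by norm_num)]
      have hP : Pf (τ:ℝ) ((0:I):ℝ) = Tp (3-3*(τ:ℝ)) := by
        rw [show ((0:I):ℝ) = 0 from rfl]
        simp [Pf]
      rw [hP, dv_Tp, hd]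
    · apply ContinuousMap.ext; intro u
      show dv hs ℓ (Ph τ ((0:I):ℝ) u).1 (Ph τ ((0:I):ℝ) u).2 = x0
      rw [show ((0:I):ℝ) = 0 from rfl]
      have hq : qf (τ:ℝ) 0 = max 1 (3-3*(τ:ℝ)) := by simp [qf]
      have hP : Pf (τ:ℝ) 0 = Tp (3-3*(τ:ℝ)) := by simp [Pf]
      rcases le_total (3-3*(τ:ℝ)) 1 with h | h
      · have hT1 : Tp (3-3*(τ:ℝ)) = (0, 3-3*(τ:ℝ)) := by rw [Tp, if_pos h]
        have hT2 : Tp (max 1 (3-3*(τ:ℝ))) = (0, 1) := by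
          rw [max_eq_left h, Tp]; norm_num
        have h1 : (Ph (τ:ℝ) 0 (u:ℝ)).1 = 0 := by
          simp only [Ph, hq, hP, hT1, hT2]
          norm_num
        rw [h1, dv_left]
      · have hq2 : qf (τ:ℝ) 0 = 3-3*(τ:ℝ) := by rw [hq, max_eq_right h]
        have hPh : Ph (τ:ℝ) 0 (u:ℝ) = Tp (3-3*(τ:ℝ)) := by
          simp only [Ph, hq2, hP]
          rw [Prod.ext_iff]
          constructor <;> simp <;> ring
        rw [hPh]
        exact dv_Tp hs ℓ _
  target' := by
    apply Subtype.ext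
    apply Prod.ext
    · show (if ((1:I):ℝ) ≤ 1/2 then _ else yv hs ℓ (2*((1:I):ℝ)-1)) = y0
      rw [if_neg (by norm_num)]
      rw [show 2*((1:I):ℝ)-1 = 1 by norm_num, yv_one]
    · apply ContinuousMap.ext; intro u
      show dv hs ℓ (Ph τ ((1:I):ℝ) u).1 (Ph τ ((1:I):ℝ) u).2 = x0
      rw [show ((1:I):ℝ) = 1 from rfl]
      have hP : Pf (τ:ℝ) 1 = (1, 0) := by
        rw [Pf, if_neg (by norm_num)]
        norm_num
      have hq : qf (τ:ℝ) 1 = 3-(τ:ℝ) := by rw [qf]; ring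
      have hT : Tp (3-(τ:ℝ)) = (1, (τ:ℝ)) := by
        rw [Tp_ge_two (by linarith [τ.2.2])]
        norm_num
      have h1 : (Ph (τ:ℝ) 1 (u:ℝ)).1 = 1 := by
        simp only [Ph, hP, hq, hT]
        norm_num
      rw [h1, dv_right]

/-- The reparametrized identity, endpoint of stage 1. -/
def Rt (ℓ : Path (HoFib.pt s hs) (HoFib.pt s hs)) (t : I) : HoFib s x0 :=
  ⟨( yv hs ℓ (max 0 (2*t-1)),
     ⟨fun u => dv hs ℓ ((1-(u:ℝ))*(max 0 (2*(t:ℝ)-1)) + u*t) u, by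
        refine cont_dv hs continuous_const ?_ contI
        exact ((continuous_const.sub contI).mul continuous_const).add
          (contI.mul continuous_const)⟩ ), by
    constructor
    · show dv hs ℓ ((1-((0:I):ℝ))*(max 0 (2*(t:ℝ)-1)) + ((0:I):ℝ)*t) ((0:I):ℝ) = _
      rw [show ((0:I):ℝ) = 0 from rfl]
      rw [show (1-(0:ℝ))*(max 0 (2*(t:ℝ)-1)) + 0*t = max 0 (2*(t:ℝ)-1) by ring]
      exact dv_zero hs ℓ _
    · show dv hs ℓ ((1-((1:I):ℝ))*(max 0 (2*(t:ℝ)-1)) + ((1:I):ℝ)*t) ((1:I):ℝ) = x0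
      rw [show ((1:I):ℝ) = 1 from rfl]
      rw [show (1-(1:ℝ))*(max 0 (2*(t:ℝ)-1)) + 1*t = (t:ℝ) by ring]
      exact dv_one hs ℓ _⟩

def Rpath (ℓ : Path (HoFib.pt s hs) (HoFib.pt s hs)) :
    Path (HoFib.pt s hs) (HoFib.pt s hs) where
  toFun := Rt hs ℓ
  continuous_toFun := by
    apply Continuous.subtype_mk
    apply Continuous.prodMk
    · exact cont_yv hs continuous_const
        (continuous_const.max ((continuous_const.mul contI).sub continuous_const))
    · apply ContinuousMap.continuous_of_continuous_uncurry
      refine cont_dv hs continuous_const ?_ (contI.comp continuous_snd)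
      exact ((continuous_const.sub (contI.comp continuous_snd)).mul
        (continuous_const.max ((continuous_const.mul (contI.comp continuous_fst)).sub
          continuous_const))).add ((contI.comp continuous_snd).mul (contI.comp continuous_fst))
  source' := by
    apply Subtype.ext
    apply Prod.ext
    · show yv hs ℓ (max 0 (2*((0:I):ℝ)-1)) = y0
      rw [show max 0 (2*((0:I):ℝ)-1) = 0 by norm_num, yv_zero]
    · apply ContinuousMap.ext; intro u
      show dv hs ℓ ((1-(u:ℝ))*(max 0 (2*((0:I):ℝ)-1)) + u*((0:I):ℝ)) u = x0
      rw [show (1-(u:ℝ))*(max 0 (2*((0:I):ℝ)-1)) + u*((0:I):ℝ) = 0 by norm_num, dv_left]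
  target' := by
    apply Subtype.ext
    apply Prod.ext
    · show yv hs ℓ (max 0 (2*((1:I):ℝ)-1)) = y0
      rw [show max 0 (2*((1:I):ℝ)-1) = 1 by norm_num, yv_one]
    · apply ContinuousMap.ext; intro u
      show dv hs ℓ ((1-(u:ℝ))*(max 0 (2*((1:I):ℝ)-1)) + u*((1:I):ℝ)) u = x0
      rw [show (1-(u:ℝ))*(max 0 (2*((1:I):ℝ)-1)) + u*((1:I):ℝ) = 1 by norm_num, dv_right]

def RC : C(Path (HoFib.pt s hs) (HoFib.pt s hs), Path (HoFib.pt s hs) (HoFib.pt s hs)) where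
  toFun := Rpath hs
  continuous_toFun := by
    rw [← Path.continuous_uncurry_iff]
    apply Continuous.subtype_mk
    apply Continuous.prodMk
    · exact cont_yv hs continuous_fst
        (continuous_const.max ((continuous_const.mul (contI.comp continuous_snd)).sub
          continuous_const))
    · apply ContinuousMap.continuous_of_continuous_uncurry
      refine cont_dv hs (continuous_fst.comp continuous_fst) ?_ (contI.comp continuous_snd)
      exact ((continuous_const.sub (contI.comp continuous_snd)).mul
        (continuous_const.max ((continuous_const.mul
          (contI.comp (continuous_snd.comp continuous_fst))).sub continuous_const))).add
        ((contI.comp continuous_snd).mul (contI.comp (continuous_snd.comp continuous_fst)))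

lemma yv_refl (r : ℝ) : yv hs (Path.refl (HoFib.pt s hs)) r = y0 := by simp [yv]
lemma dv_refl (v w : ℝ) : dv hs (Path.refl (HoFib.pt s hs)) v w = x0 := by simp [dv]

lemma G_basept : Gm hd hs (Path.refl (HoFib.pt s hs)) = HoFib.pt d hd := by
  apply Subtype.ext
  apply Prod.ext
  · rfl
  · apply ContinuousMap.ext; intro t; rfl

/-- Stage 1: `F ∘ G` is homotopic to the reparametrized identity `R`. -/
def Stage1 : ((FC hd hs hret).comp (GC hd hs)).HomotopyRel (RC hs)
    {Path.refl (HoFib.pt s hs)} where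
  toFun := fun p => Kpath hd hs hret p.1 p.2
  continuous_toFun := by
    rw [← Path.continuous_uncurry_iff]
    have tA : Continuous fun q : (I × Path (HoFib.pt s hs) (HoFib.pt s hs)) × I => (q.1.1:ℝ) :=
      contI.comp (continuous_fst.comp continuous_fst)
    have tL : Continuous fun q : (I × Path (HoFib.pt s hs) (HoFib.pt s hs)) × I => q.1.2 :=
      continuous_snd.comp continuous_fst
    have tT : Continuous fun q : (I × Path (HoFib.pt s hs) (HoFib.pt s hs)) × I => (q.2:ℝ) :=
      contI.comp continuous_snd
    apply Continuous.subtype_mk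
    apply Continuous.prodMk
    · apply Continuous.if_le
      · exact d.continuous.comp (cont_dv hs tL
          (Pf_cont.comp (tA.prodMk tT)).fst (Pf_cont.comp (tA.prodMk tT)).snd)
      · exact cont_yv hs tL ((continuous_const.mul tT).sub continuous_const)
      · exact tT
      · exact continuous_const
      · intro q hq
        have hP : Pf (q.1.1:ℝ) (q.2:ℝ) = (0, 0) := by rw [hq]; norm_num [Pf]
        rw [hP, show (2*(q.2:ℝ)-1) = 0 by rw [hq]; ring, dv_left, yv_zero, hd]
    · apply ContinuousMap.continuous_of_continuous_uncurry
      have h : Continuous fun q : ((I × Path (HoFib.pt s hs) (HoFib.pt s hs)) × I) × I =>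
          Ph (q.1.1.1:ℝ) (q.1.2:ℝ) (q.2:ℝ) :=
        Ph_cont.comp ((((contI.comp (continuous_fst.comp (continuous_fst.comp
          continuous_fst))).prodMk (contI.comp (continuous_snd.comp
            continuous_fst))).prodMk (contI.comp continuous_snd)))
      exact cont_dv hs (continuous_snd.comp (continuous_fst.comp continuous_fst)) h.fst h.snd
  map_zero_left := by
    intro ℓ
    apply Path.ext
    funext t
    apply Subtype.ext
    apply Prod.ext
    · show (if (t:ℝ) ≤ 1/2 then d (dv hs ℓ (Pf ((0:I):ℝ) t).1 (Pf ((0:I):ℝ) t).2)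
        else yv hs ℓ (2*t-1)) =
        (if (t:ℝ) ≤ 1/2 then d (s ((Gm hd hs ℓ).1.2 (pr (1-2*(t:ℝ)))))
          else (Gm hd hs ℓ).1.2 (pr (2*(t:ℝ)-1)))
      rw [show ((0:I):ℝ) = 0 from rfl]
      split_ifs with h
      · have hP : Pf 0 (t:ℝ) = (1-2*(t:ℝ), 0) := by
          rw [Pf, if_pos h]
          norm_num [Tp_three]
        rw [hP, dv_zero]
        rfl
      · rfl
    · apply ContinuousMap.ext; intro u
      show dv hs ℓ (Ph ((0:I):ℝ) t u).1 (Ph ((0:I):ℝ) t u).2 = _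
      rw [show ((0:I):ℝ) = 0 from rfl]
      have hq : qf 0 (t:ℝ) = 3 := by simp [qf]; ring
      have hPf2 : (Pf 0 (t:ℝ)).2 = 0 := by
        rw [Pf]; split_ifs <;> norm_num [Tp_three]
      have hPf1 : (Pf 0 (t:ℝ)).1 = |1-2*(t:ℝ)| := by
        rw [Pf]; split_ifs with h
        · norm_num [Tp_three]
          rw [abs_of_nonneg (by linarith)]
        · rw [abs_of_nonpos (by linarith)]
          norm_num
      have h1 : (Ph 0 (t:ℝ) (u:ℝ)).1 = (1-(u:ℝ))*|1-2*(t:ℝ)| + u := by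
        simp only [Ph, hq, Tp_three, hPf1]
        ring
      have h2 : (Ph 0 (t:ℝ) (u:ℝ)).2 = 0 := by
        simp only [Ph, hq, Tp_three, hPf2]
        ring
      rw [h1, h2, dv_zero]
      rfl
  map_one_left := by
    intro ℓ
    apply Path.ext
    funext t
    apply Subtype.ext
    apply Prod.ext
    · show (if (t:ℝ) ≤ 1/2 then d (dv hs ℓ (Pf ((1:I):ℝ) t).1 (Pf ((1:I):ℝ) t).2)
        else yv hs ℓ (2*t-1)) = yv hs ℓ (max 0 (2*(t:ℝ)-1))
      rw [show ((1:I):ℝ) = 1 from rfl]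
      split_ifs with h
      · have hP : Pf 1 (t:ℝ) = (0, 0) := by
          rw [Pf, if_pos h]
          norm_num [Tp_zero]
        rw [hP, dv_left, max_eq_left (by linarith), yv_zero, hd]
      · rw [max_eq_right (by linarith)]
    · apply ContinuousMap.ext; intro u
      show dv hs ℓ (Ph ((1:I):ℝ) t u).1 (Ph ((1:I):ℝ) t u).2 =
        dv hs ℓ ((1-(u:ℝ))*(max 0 (2*(t:ℝ)-1)) + u*t) u
      rw [show ((1:I):ℝ) = 1 from rfl]
      have hq : qf 1 (t:ℝ) = 1+(t:ℝ) := by simp [qf]; ring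
      have hPf : Pf 1 (t:ℝ) = (max 0 (2*(t:ℝ)-1), 0) := by
        rw [Pf]; split_ifs with h
        · rw [max_eq_left (by linarith)]
          norm_num [Tp_zero]
        · rw [max_eq_right (by linarith)]
      have h1 : (Ph 1 (t:ℝ) (u:ℝ)).1 = (1-(u:ℝ))*(max 0 (2*(t:ℝ)-1)) + u*t := by
        simp only [Ph, hq, hPf, Tp_onet]
      have h2 : (Ph 1 (t:ℝ) (u:ℝ)).2 = (u:ℝ) := by
        simp only [Ph, hq, hPf, Tp_onet]
        ring
      rw [h1, h2]
  prop' := by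
    intro τ ℓ hℓ
    simp only [Set.mem_singleton_iff] at hℓ
    subst hℓ
    show Kpath hd hs hret τ (Path.refl (HoFib.pt s hs)) = _
    have h2 : ((FC hd hs hret).comp (GC hd hs)) (Path.refl (HoFib.pt s hs)) =
        Path.refl (HoFib.pt s hs) := by
      show Fm hd hs hret (Gm hd hs (Path.refl (HoFib.pt s hs))) = _
      rw [G_basept, F_basept]
    rw [h2]
    apply Path.ext
    funext t
    rw [Path.refl_apply]
    apply Subtype.ext
    apply Prod.ext
    · show (if (t:ℝ) ≤ 1/2
          then d (dv hs (Path.refl (HoFib.pt s hs)) (Pf τ t).1 (Pf τ t).2)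
          else yv hs (Path.refl (HoFib.pt s hs)) (2*t-1)) = y0
      split_ifs
      · rw [dv_refl, hd]
      · rw [yv_refl]
    · apply ContinuousMap.ext; intro u
      show dv hs (Path.refl (HoFib.pt s hs)) (Ph τ t u).1 (Ph τ t u).2 = x0
      rw [dv_refl]

/-- Stage 2, pointwise. -/
def K2t (τ : I) (ℓ : Path (HoFib.pt s hs) (HoFib.pt s hs)) (t : I) : HoFib s x0 :=
  ⟨( yv hs ℓ (max ((τ:ℝ)*t) (2*t-1)),
     ⟨fun u => dv hs ℓ ((1-(u:ℝ))*(max ((τ:ℝ)*t) (2*(t:ℝ)-1)) + u*t) u, by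
        refine cont_dv hs continuous_const ?_ contI
        exact ((continuous_const.sub contI).mul continuous_const).add
          (contI.mul continuous_const)⟩ ), by
    constructor
    · show dv hs ℓ ((1-((0:I):ℝ))*(max ((τ:ℝ)*t) (2*(t:ℝ)-1)) + ((0:I):ℝ)*t) ((0:I):ℝ) = _
      rw [show ((0:I):ℝ) = 0 from rfl,
        show (1-(0:ℝ))*(max ((τ:ℝ)*t) (2*(t:ℝ)-1)) + 0*t = max ((τ:ℝ)*t) (2*(t:ℝ)-1) by ring]
      exact dv_zero hs ℓ _
    · show dv hs ℓ ((1-((1:I):ℝ))*(max ((τ:ℝ)*t) (2*(t:ℝ)-1)) + ((1:I):ℝ)*t) ((1:I):ℝ) = x0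
      rw [show ((1:I):ℝ) = 1 from rfl,
        show (1-(1:ℝ))*(max ((τ:ℝ)*t) (2*(t:ℝ)-1)) + 1*t = (t:ℝ) by ring]
      exact dv_one hs ℓ _⟩

def K2path (τ : I) (ℓ : Path (HoFib.pt s hs) (HoFib.pt s hs)) :
    Path (HoFib.pt s hs) (HoFib.pt s hs) where
  toFun := K2t hs τ ℓ
  continuous_toFun := by
    apply Continuous.subtype_mk
    apply Continuous.prodMk
    · exact cont_yv hs continuous_const
        ((continuous_const.mul contI).max ((continuous_const.mul contI).sub continuous_const))
    · apply ContinuousMap.continuous_of_continuous_uncurry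
      refine cont_dv hs continuous_const ?_ (contI.comp continuous_snd)
      exact ((continuous_const.sub (contI.comp continuous_snd)).mul
        ((continuous_const.mul (contI.comp continuous_fst)).max
          ((continuous_const.mul (contI.comp continuous_fst)).sub continuous_const))).add
        ((contI.comp continuous_snd).mul (contI.comp continuous_fst))
  source' := by
    apply Subtype.ext
    apply Prod.ext
    · show yv hs ℓ (max ((τ:ℝ)*((0:I):ℝ)) (2*((0:I):ℝ)-1)) = y0
      rw [show max ((τ:ℝ)*((0:I):ℝ)) (2*((0:I):ℝ)-1) = 0 by norm_num, yv_zero]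
    · apply ContinuousMap.ext; intro u
      show dv hs ℓ ((1-(u:ℝ))*(max ((τ:ℝ)*((0:I):ℝ)) (2*((0:I):ℝ)-1)) + u*((0:I):ℝ)) u = x0
      rw [show (1-(u:ℝ))*(max ((τ:ℝ)*((0:I):ℝ)) (2*((0:I):ℝ)-1)) + u*((0:I):ℝ) = 0
        by norm_num, dv_left]
  target' := by
    apply Subtype.ext
    apply Prod.ext
    · show yv hs ℓ (max ((τ:ℝ)*((1:I):ℝ)) (2*((1:I):ℝ)-1)) = y0
      have hmax : max ((τ:ℝ)*((1:I):ℝ)) (2*((1:I):ℝ)-1) = 1 := by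
        rw [show ((1:I):ℝ) = 1 from rfl]
        rw [max_eq_right (by nlinarith [τ.2.2])]
        ring
      rw [hmax, yv_one]
    · apply ContinuousMap.ext; intro u
      show dv hs ℓ ((1-(u:ℝ))*(max ((τ:ℝ)*((1:I):ℝ)) (2*((1:I):ℝ)-1)) + u*((1:I):ℝ)) u = x0
      have hmax : max ((τ:ℝ)*((1:I):ℝ)) (2*((1:I):ℝ)-1) = 1 := by
        rw [show ((1:I):ℝ) = 1 from rfl]
        rw [max_eq_right (by nlinarith [τ.2.2])]
        ring
      rw [show (1-(u:ℝ))*(max ((τ:ℝ)*((1:I):ℝ)) (2*((1:I):ℝ)-1)) + u*((1:I):ℝ) = 1 by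
        rw [hmax, show ((1:I):ℝ) = 1 from rfl]; ring, dv_right]

lemma R_refl : Rpath hs (Path.refl (HoFib.pt s hs)) = Path.refl (HoFib.pt s hs) := by
  apply Path.ext
  funext t
  rw [Path.refl_apply]
  apply Subtype.ext
  apply Prod.ext
  · show yv hs (Path.refl (HoFib.pt s hs)) (max 0 (2*(t:ℝ)-1)) = y0
    rw [yv_refl]
  · apply ContinuousMap.ext; intro u
    show dv hs (Path.refl (HoFib.pt s hs))
      ((1-(u:ℝ))*(max 0 (2*(t:ℝ)-1)) + u*t) u = x0
    rw [dv_refl]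

/-- Stage 2: `R` is homotopic to the identity. -/
def Stage2 : (RC hs).HomotopyRel (ContinuousMap.id (Path (HoFib.pt s hs) (HoFib.pt s hs)))
    {Path.refl (HoFib.pt s hs)} where
  toFun := fun p => K2path hs p.1 p.2
  continuous_toFun := by
    rw [← Path.continuous_uncurry_iff]
    have tA : Continuous fun q : (I × Path (HoFib.pt s hs) (HoFib.pt s hs)) × I => (q.1.1:ℝ) :=
      contI.comp (continuous_fst.comp continuous_fst)
    have tL : Continuous fun q : (I × Path (HoFib.pt s hs) (HoFib.pt s hs)) × I => q.1.2 :=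
      continuous_snd.comp continuous_fst
    have tT : Continuous fun q : (I × Path (HoFib.pt s hs) (HoFib.pt s hs)) × I => (q.2:ℝ) :=
      contI.comp continuous_snd
    apply Continuous.subtype_mk
    apply Continuous.prodMk
    · exact cont_yv hs tL ((tA.mul tT).max ((continuous_const.mul tT).sub continuous_const))
    · apply ContinuousMap.continuous_of_continuous_uncurry
      refine cont_dv hs (tL.comp continuous_fst) ?_ (contI.comp continuous_snd)
      exact ((continuous_const.sub (contI.comp continuous_snd)).mul
        (((tA.comp continuous_fst).mul (tT.comp continuous_fst)).max
          ((continuous_const.mul (tT.comp continuous_fst)).sub continuous_const))).add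
        ((contI.comp continuous_snd).mul (tT.comp continuous_fst))
  map_zero_left := by
    intro ℓ
    apply Path.ext
    funext t
    apply Subtype.ext
    apply Prod.ext
    · show yv hs ℓ (max (((0:I):ℝ)*t) (2*(t:ℝ)-1)) = yv hs ℓ (max 0 (2*(t:ℝ)-1))
      rw [show ((0:I):ℝ)*(t:ℝ) = 0 by norm_num]
    · apply ContinuousMap.ext; intro u
      show dv hs ℓ ((1-(u:ℝ))*(max (((0:I):ℝ)*t) (2*(t:ℝ)-1)) + u*t) u =
        dv hs ℓ ((1-(u:ℝ))*(max 0 (2*(t:ℝ)-1)) + u*t) u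
      rw [show ((0:I):ℝ)*(t:ℝ) = 0 by norm_num]
  map_one_left := by
    intro ℓ
    apply Path.ext
    funext t
    simp only [ContinuousMap.id_apply]
    apply Subtype.ext
    apply Prod.ext
    · show yv hs ℓ (max (((1:I):ℝ)*t) (2*(t:ℝ)-1)) = (ℓ t).1.1
      rw [show ((1:I):ℝ)*(t:ℝ) = (t:ℝ) by norm_num,
        max_eq_left (by linarith [t.2.2]), yv, pr_coe]
    · apply ContinuousMap.ext; intro u
      show dv hs ℓ ((1-(u:ℝ))*(max (((1:I):ℝ)*t) (2*(t:ℝ)-1)) + u*t) u = (ℓ t).1.2 u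
      rw [show ((1:I):ℝ)*(t:ℝ) = (t:ℝ) by norm_num, max_eq_left (by linarith [t.2.2]),
        show (1-(u:ℝ))*(t:ℝ) + u*t = (t:ℝ) by ring, dv, pr_coe, pr_coe]
  prop' := by
    intro τ ℓ hℓ
    simp only [Set.mem_singleton_iff] at hℓ
    subst hℓ
    show K2path hs τ (Path.refl (HoFib.pt s hs)) = (RC hs) (Path.refl (HoFib.pt s hs))
    have h2 : (RC hs) (Path.refl (HoFib.pt s hs)) = Path.refl (HoFib.pt s hs) := R_refl hs
    rw [h2]
    apply Path.ext
    funext t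
    rw [Path.refl_apply]
    apply Subtype.ext
    apply Prod.ext
    · show yv hs (Path.refl (HoFib.pt s hs)) (max ((τ:ℝ)*t) (2*(t:ℝ)-1)) = y0
      rw [yv_refl]
    · apply ContinuousMap.ext; intro u
      show dv hs (Path.refl (HoFib.pt s hs))
        ((1-(u:ℝ))*(max ((τ:ℝ)*t) (2*(t:ℝ)-1)) + u*t) u = x0
      rw [dv_refl]

/-- The homotopy `F ∘ G ≃ id` rel basepoint. -/
def H2 : ((FC hd hs hret).comp (GC hd hs)).HomotopyRel
    (ContinuousMap.id (Path (HoFib.pt s hs) (HoFib.pt s hs)))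
    {Path.refl (HoFib.pt s hs)} :=
  (Stage1 hd hs hret).trans (Stage2 hs)

end Main
end Stmt2Aux

theorem statement2 {X Y : Type*} [TopologicalSpace X] [TopologicalSpace Y]
    (x0 : X) (y0 : Y) (d : C(X, Y)) (s : C(Y, X))
    (hd : d x0 = y0) (hs : s y0 = x0)
    (hret : ∀ x : X, s (d x) = x) :
    WeaklyEquivalentTo (HoFib d y0) (HoFib.pt d hd)
      (Path (HoFib.pt s hs) (HoFib.pt s hs)) (Path.refl (HoFib.pt s hs)) := by
  refine ⟨Stmt2Aux.FC hd hs hret, Stmt2Aux.F_basept hd hs hret, fun n => ?_⟩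
  have hH2 : ((Stmt2Aux.FC hd hs hret).comp (Stmt2Aux.GC hd hs)).HomotopyRel
      (ContinuousMap.id _) {(Stmt2Aux.FC hd hs hret) (HoFib.pt d hd)} := by
    rw [show (Stmt2Aux.FC hd hs hret) (HoFib.pt d hd) = Path.refl (HoFib.pt s hs)
      from Stmt2Aux.F_basept hd hs hret]
    exact Stmt2Aux.H2 hd hs hret
  exact Stmt2Aux.bijective_piMap n _ _ _ (Stmt2Aux.H1 hd hs hret) hH2

end
end

section
/- If d^0, d^1 : Z^0 → Z^1 are the two coface maps of a cosimplicial pointed space Z and s^0 : Z^1 → Z^0 is the codegeneracy, then the homotopy fibers of d^0 and of d^1 are both weakly equivalent to Ω hofib(s^0); in particular hofib(d^0) ≃ hofib(d^1). -/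
/-!
STATEMENT 3: If d^0, d^1 : Z^0 → Z^1 are the two coface maps of a cosimplicial
pointed space Z and s^0 : Z^1 → Z^0 is the codegeneracy, then the homotopy
fibers of d^0 and of d^1 are both weakly equivalent to Ω hofib(s^0);
in particular hofib(d^0) ≃ hofib(d^1).
-/

noncomputable section

open scoped Topology unitInterval

/-! ## Generalities on `piMap` -/

section PiLemmas
variable {X Y Z : Type*} [TopologicalSpace X] [TopologicalSpace Y] [TopologicalSpace Z]

lemma piMap_comp (n : ℕ) (f : C(X,Y)) (g : C(Y,Z)) (x : X) (a : HomotopyGroup.Pi n X x) :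
    piMap n (g.comp f) x a = piMap n g (f x) (piMap n f x a) := by
  induction a using Quotient.inductionOn
  rfl

/-- Change of viewpoint: a homotopy class at `x` is one at `y` when `x = y`. -/
def piCast (n : ℕ) {x y : X} (h : x = y) :
    HomotopyGroup.Pi n X x → HomotopyGroup.Pi n X y :=
  Quotient.map' (fun γ => ⟨γ.1, fun v hv => (γ.2 v hv).trans h⟩) (fun _ _ hh => hh)

lemma bijective_piMap_of_deform (n : ℕ) (F : C(X,X)) (x : X) (H : C(I × X, X))
    (H0 : ∀ z, H (0, z) = z) (H1 : ∀ z, H (1, z) = F z) (Hpt : ∀ t, H (t, x) = x) :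
    Function.Bijective (piMap n F x) := by
  have hFx : F x = x := by rw [← H1 x, Hpt 1]
  have core : ∀ (δ : C((Fin n → I), X)), (∀ v ∈ Cube.boundary (Fin n), δ v = x) →
      ContinuousMap.HomotopicRel (F.comp δ) δ (Cube.boundary (Fin n)) := by
    intro δ hδ
    refine ⟨ContinuousMap.HomotopyRel.symm ?_⟩
    refine ⟨⟨⟨fun p => H (p.1, δ p.2), by fun_prop⟩, by simp [H0], by simp [H1]⟩, ?_⟩
    intro t v hv
    show H (t, δ v) = δ v
    rw [hδ v hv, Hpt]
  constructor
  · intro a b hab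
    have key : ∀ c : HomotopyGroup.Pi n X x, piCast n hFx (piMap n F x c) = c := by
      intro c
      induction c using Quotient.inductionOn with
      | _ γ =>
        apply Quotient.sound
        exact core γ.1 γ.2
    rw [← key a, ← key b, hab]
  · intro b
    refine ⟨piCast n hFx b, ?_⟩
    induction b using Quotient.inductionOn with
    | _ δ =>
      apply Quotient.sound
      refine core δ.1 ?_
      intro v hv
      rw [δ.2 v hv, hFx]

lemma piMap_surjective_congr (n : ℕ) (f : C(X,Y)) {x x' : X} (h : x = x')
    (hs : Function.Surjective (piMap n f x)) : Function.Surjective (piMap n f x') := by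
  subst h; exact hs

end PiLemmas

/-! ## The clamp function -/

def clamp (t : ℝ) : I := Set.projIcc 0 1 zero_le_one t

@[fun_prop] lemma continuous_clamp : Continuous clamp :=
  continuous_projIcc (h := zero_le_one)

@[simp] lemma clamp_coe (t : I) : clamp ↑t = t := Set.projIcc_val zero_le_one t

lemma clamp_of_nonpos {t : ℝ} (h : t ≤ 0) : clamp t = 0 := Set.projIcc_of_le_left _ h

lemma clamp_of_one_le {t : ℝ} (h : 1 ≤ t) : clamp t = 1 := Set.projIcc_of_right_le _ h

lemma clamp_max0 (t : ℝ) : clamp (max 0 t) = clamp t := by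
  rcases le_total t 0 with h | h
  · rw [clamp_of_nonpos h, max_eq_left h, clamp_of_nonpos le_rfl]
  · rw [max_eq_right h]

/-! ## HoFib accessors and constructors -/

section Access
variable {X Y : Type*} [TopologicalSpace X] [TopologicalSpace Y] {f : C(X,Y)} {y0 : Y}

def HoFib.xpt (w : HoFib f y0) : X := (Subtype.val w).1

def HoFib.q (w : HoFib f y0) : C(I, Y) := (Subtype.val w).2

lemma HoFib.q_zero (w : HoFib f y0) : w.q 0 = f w.xpt := (Subtype.prop w).1

lemma HoFib.q_one (w : HoFib f y0) : w.q 1 = y0 := (Subtype.prop w).2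

@[fun_prop] lemma HoFib.continuous_q : Continuous fun w : HoFib f y0 => w.q :=
  continuous_subtype_val.snd

@[fun_prop] lemma HoFib.continuous_xpt : Continuous fun w : HoFib f y0 => w.xpt :=
  continuous_subtype_val.fst

lemma HoFib.ext' {w w' : HoFib f y0} (h1 : w.xpt = w'.xpt) (h2 : ∀ t, w.q t = w'.q t) :
    w = w' := by
  apply Subtype.ext
  exact Prod.ext h1 (ContinuousMap.ext h2)

@[simp] lemma HoFib.pt_xpt {x0 : X} (hf : f x0 = y0) : (HoFib.pt f hf).xpt = x0 := rfl

@[simp] lemma HoFib.pt_q {x0 : X} (hf : f x0 = y0) (t : I) : (HoFib.pt f hf).q t = y0 := rfl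

end Access

section Constructors
variable {A X Y Z : Type*} [TopologicalSpace A] [TopologicalSpace X] [TopologicalSpace Y]
  [TopologicalSpace Z]

def mkHoFibMap (f : C(X,Y)) (y0 : Y) (g : C(A, X)) (p : C(A × I, Y))
    (h0 : ∀ a, p (a, 0) = f (g a)) (h1 : ∀ a, p (a, 1) = y0) : C(A, HoFib f y0) :=
  ⟨fun a => ⟨(g a, p.curry a), h0 a, h1 a⟩,
    Continuous.subtype_mk (g.continuous.prodMk p.curry.continuous) _⟩

@[simp] lemma mkHoFibMap_xpt (f : C(X,Y)) (y0 : Y) (g : C(A, X)) (p : C(A × I, Y))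
    (h0 : ∀ a, p (a, 0) = f (g a)) (h1 : ∀ a, p (a, 1) = y0) (a : A) :
    (mkHoFibMap f y0 g p h0 h1 a).xpt = g a := rfl

@[simp] lemma mkHoFibMap_q (f : C(X,Y)) (y0 : Y) (g : C(A, X)) (p : C(A × I, Y))
    (h0 : ∀ a, p (a, 0) = f (g a)) (h1 : ∀ a, p (a, 1) = y0) (a : A) (t : I) :
    (mkHoFibMap f y0 g p h0 h1 a).q t = p (a, t) := rfl

def mkPathMap {z₁ z₂ : Z} (c : C(A × I, Z))
    (h0 : ∀ a, c (a, 0) = z₁) (h1 : ∀ a, c (a, 1) = z₂) : C(A, Path z₁ z₂) :=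
  ⟨fun a => ⟨c.curry a, h0 a, h1 a⟩, by
    rw [← Path.continuous_uncurry_iff]
    exact c.continuous⟩

@[simp] lemma mkPathMap_apply {z₁ z₂ : Z} (c : C(A × I, Z))
    (h0 : ∀ a, c (a, 0) = z₁) (h1 : ∀ a, c (a, 1) = z₂) (a : A) (t : I) :
    (mkPathMap c h0 h1 a) t = c (a, t) := rfl

end Constructors

/-! ## Real-valued reparametrization helpers -/

namespace HoFibAux

def uu (w : ℝ) : ℝ := max 0 (2*w - 1)
def vv (w : ℝ) : ℝ := min 1 (2*w)
def zeta (u : ℝ) : ℝ := min 1 (max 0 (4*u - 1))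
def th (u : ℝ) : ℝ := min 1 (max 0 (4*u - 2))
def eta (u : ℝ) : ℝ := min 1 (4 - 4*u)
def nu (u : ℝ) : ℝ := min 1 (4*u)
def cc (t : ℝ) : ℝ := max 0 (2*t - 1)
def ll (t : ℝ) : ℝ := max 0 (1 - 2*t)
def mm (w t : ℝ) : ℝ := max 0 ((2*t - vv w) / (2 - vv w))
def AA (w t s : ℝ) : ℝ := cc t + ll t * th (uu w) + zeta (uu w) * s
def BB (w t s : ℝ) : ℝ := eta (uu w) * (s + (1 - s) * (ll t * nu (uu w)))

@[fun_prop] lemma continuous_uu : Continuous uu := by unfold uu; fun_prop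
@[fun_prop] lemma continuous_vv : Continuous vv := by unfold vv; fun_prop
@[fun_prop] lemma continuous_zeta : Continuous zeta := by unfold zeta; fun_prop
@[fun_prop] lemma continuous_th : Continuous th := by unfold th; fun_prop
@[fun_prop] lemma continuous_eta : Continuous eta := by unfold eta; fun_prop
@[fun_prop] lemma continuous_nu : Continuous nu := by unfold nu; fun_prop
@[fun_prop] lemma continuous_cc : Continuous cc := by unfold cc; fun_prop
@[fun_prop] lemma continuous_ll : Continuous ll := by unfold ll; fun_prop

lemma vv_le_one (w : ℝ) : vv w ≤ 1 := min_le_left _ _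

lemma two_sub_vv_pos (w : ℝ) : 0 < 2 - vv w := by
  have := vv_le_one w; linarith

@[fun_prop] lemma continuous_mm : Continuous fun p : ℝ × ℝ => mm p.1 p.2 := by
  unfold mm
  apply Continuous.max continuous_const
  apply Continuous.div (by fun_prop) (by fun_prop)
  intro p
  have := two_sub_vv_pos p.1
  linarith

@[fun_prop] lemma continuous_AA : Continuous fun p : ℝ × ℝ × ℝ => AA p.1 p.2.1 p.2.2 := by
  unfold AA; fun_prop

@[fun_prop] lemma continuous_BB : Continuous fun p : ℝ × ℝ × ℝ => BB p.1 p.2.1 p.2.2 := by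
  unfold BB; fun_prop

lemma mm_comp {A : Type*} [TopologicalSpace A] {w t : A → ℝ}
    (hw : Continuous w) (ht : Continuous t) : Continuous fun a => mm (w a) (t a) :=
  continuous_mm.comp (hw.prodMk ht)

lemma AA_comp {A : Type*} [TopologicalSpace A] {w t s : A → ℝ}
    (hw : Continuous w) (ht : Continuous t) (hs : Continuous s) :
    Continuous fun a => AA (w a) (t a) (s a) :=
  continuous_AA.comp (hw.prodMk (ht.prodMk hs))

lemma BB_comp {A : Type*} [TopologicalSpace A] {w t s : A → ℝ}
    (hw : Continuous w) (ht : Continuous t) (hs : Continuous s) :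
    Continuous fun a => BB (w a) (t a) (s a) :=
  continuous_BB.comp (hw.prodMk (ht.prodMk hs))

-- basic interval facts for w t s u coming from I
section Facts
variable {w t s : ℝ}

lemma uu_nonneg : 0 ≤ uu w := le_max_left _ _
lemma uu_mem (h0 : 0 ≤ w) (h1 : w ≤ 1) : uu w ≤ 1 := by
  unfold uu; rw [max_le_iff]; constructor <;> linarith
lemma cc_nonneg : 0 ≤ cc t := le_max_left _ _
lemma ll_nonneg : 0 ≤ ll t := le_max_left _ _
lemma zeta_nonneg : 0 ≤ zeta u := le_min zero_le_one (le_max_left _ _)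
lemma th_nonneg : 0 ≤ th u := le_min zero_le_one (le_max_left _ _)
lemma nu_nonneg (h : 0 ≤ u) : 0 ≤ nu u := le_min zero_le_one (by linarith)
lemma eta_nonneg (h : u ≤ 1) : 0 ≤ eta u := by
  unfold eta; rw [le_min_iff]; constructor <;> [exact zero_le_one; linarith]
lemma zeta_le_one : zeta u ≤ 1 := min_le_left _ _
lemma th_le_one : th u ≤ 1 := min_le_left _ _
lemma eta_le_one : eta u ≤ 1 := min_le_left _ _
lemma nu_le_one : nu u ≤ 1 := min_le_left _ _

lemma cc_add_ll (t : ℝ) : cc t + ll t = |2*t - 1| := by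
  unfold cc ll
  rcases le_total (2*t - 1) 0 with h | h
  · rw [max_eq_left h, abs_of_nonpos h, max_eq_right (by linarith)]; ring
  · rw [max_eq_right h, abs_of_nonneg h, max_eq_left (by linarith)]; ring

lemma uu_zero : uu 0 = 0 := by unfold uu; rw [max_eq_left]; norm_num
lemma uu_one : uu 1 = 1 := by unfold uu; rw [max_eq_right] <;> norm_num
lemma zeta_zero : zeta 0 = 0 := by unfold zeta; norm_num
lemma th_zero : th 0 = 0 := by unfold th; norm_num
lemma eta_zero : eta 0 = 1 := by unfold eta; norm_num
lemma nu_zero : nu 0 = 0 := by unfold nu; norm_num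
lemma zeta_one : zeta 1 = 1 := by unfold zeta; norm_num
lemma th_one : th 1 = 1 := by unfold th; norm_num
lemma eta_one : eta 1 = 0 := by unfold eta; norm_num
lemma nu_one : nu 1 = 1 := by unfold nu; norm_num

lemma eta_eq_one (h : u ≤ 3/4) : eta u = 1 := by
  unfold eta; rw [min_eq_left]; linarith
lemma zeta_eq_one (h : 1/2 ≤ u) : zeta u = 1 := by
  unfold zeta; rw [max_eq_right, min_eq_left] <;> linarith
lemma th_eq_zero (h : u ≤ 1/2) : th u = 0 := by
  unfold th; rw [max_eq_left, min_eq_right] <;> linarith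
lemma th_eq_one (h : 3/4 ≤ u) : th u = 1 := by
  unfold th; rw [max_eq_right, min_eq_left] <;> linarith
lemma nu_eq_one (h : 1/4 ≤ u) : nu u = 1 := by
  unfold nu; rw [min_eq_left]; linarith
lemma zeta_eq_zero (h : u ≤ 1/4) : zeta u = 0 := by
  unfold zeta; rw [max_eq_left, min_eq_right] <;> linarith

lemma vv_nonneg (h : 0 ≤ w) : 0 ≤ vv w := le_min zero_le_one (by linarith)

lemma uu_eq_zero (h : 2*w ≤ 1) : uu w = 0 := max_eq_left (by linarith)

lemma vv_eq_one (h : 1 ≤ 2*w) : vv w = 1 := min_eq_left (by linarith)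

lemma mm_eq_cc (h : 1 ≤ 2*w) (t : ℝ) : mm w t = cc t := by
  unfold mm cc; rw [vv_eq_one h]; norm_num

lemma AA_u0 (h : uu w = 0) (t s : ℝ) : AA w t s = cc t := by
  unfold AA; rw [h, th_zero, zeta_zero]; ring

lemma BB_u0 (h : uu w = 0) (t s : ℝ) : BB w t s = s := by
  unfold BB; rw [h, eta_zero, nu_zero]; ring

lemma cc_eq_zero (h : 2*t ≤ 1) : cc t = 0 := max_eq_left (by linarith)

lemma ll_eq_zero (h : 1 ≤ 2*t) : ll t = 0 := max_eq_left (by linarith)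

lemma cc_zero : cc 0 = 0 := by unfold cc; rw [max_eq_left]; norm_num
lemma ll_zero : ll 0 = 1 := by unfold ll; rw [max_eq_right] <;> norm_num
lemma cc_one : cc 1 = 1 := by unfold cc; rw [max_eq_right] <;> norm_num
lemma ll_one : ll 1 = 0 := by unfold ll; rw [max_eq_left]; norm_num

lemma mm_t_zero (hw : 0 ≤ w) : mm w 0 = 0 := by
  unfold mm
  rw [max_eq_left]
  apply div_nonpos_of_nonpos_of_nonneg
  · have := vv_nonneg hw; linarith
  · have := two_sub_vv_pos w; linarith

lemma mm_t_one : mm w 1 = 1 := by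
  unfold mm
  rw [show 2*(1:ℝ) - vv w = 2 - vv w by ring, div_self (by have := two_sub_vv_pos w; linarith)]
  rw [max_eq_right] <;> norm_num

lemma mm_w_zero (ht : 0 ≤ t) : mm 0 t = t := by
  unfold mm vv
  rw [show min 1 (2*(0:ℝ)) = 0 by norm_num]
  rw [show (2*t - 0)/(2 - 0) = t by ring, max_eq_right ht]

lemma BB_s1 (w t : ℝ) : BB w t 1 = eta (uu w) := by unfold BB; ring

end Facts

end HoFibAux

/-! ## The loop space evaluators -/

section Geometry
variable {X Y : Type*} [TopologicalSpace X] [TopologicalSpace Y]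

open HoFibAux

variable (r : C(Y,X)) {x0 : X} {y0 : Y}

/-- evaluation of the second (path) component of a loop in `HoFib r x0`. -/
def pv (hr : r y0 = x0) (γ : Path (HoFib.pt r hr) (HoFib.pt r hr)) (θ β : ℝ) : X :=
  (γ (clamp θ)).q (clamp β)

/-- evaluation of the first component of a loop in `HoFib r x0`. -/
def yv (hr : r y0 = x0) (γ : Path (HoFib.pt r hr) (HoFib.pt r hr)) (θ : ℝ) : Y :=
  (γ (clamp θ)).xpt

variable (hr : r y0 = x0)

@[fun_prop] lemma continuous_pv :
    Continuous fun p : (Path (HoFib.pt r hr) (HoFib.pt r hr) × ℝ) × ℝ =>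
      pv r hr p.1.1 p.1.2 p.2 := by
  unfold pv
  have h1 : Continuous fun p : (Path (HoFib.pt r hr) (HoFib.pt r hr) × ℝ) × ℝ =>
      (p.1.1 (clamp p.1.2)) := by fun_prop
  exact (HoFib.continuous_q.comp h1).eval (by fun_prop)

@[fun_prop] lemma continuous_yv :
    Continuous fun p : Path (HoFib.pt r hr) (HoFib.pt r hr) × ℝ =>
      yv r hr p.1 p.2 := by
  unfold yv
  have h1 : Continuous fun p : Path (HoFib.pt r hr) (HoFib.pt r hr) × ℝ =>
      (p.1 (clamp p.2)) := by fun_prop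
  exact HoFib.continuous_xpt.comp h1

lemma pv_comp {A : Type*} [TopologicalSpace A]
    {g : A → Path (HoFib.pt r hr) (HoFib.pt r hr)} {θ β : A → ℝ}
    (hg : Continuous g) (hθ : Continuous θ) (hβ : Continuous β) :
    Continuous fun a => pv r hr (g a) (θ a) (β a) :=
  (continuous_pv r hr).comp ((hg.prodMk hθ).prodMk hβ)

lemma yv_comp {A : Type*} [TopologicalSpace A]
    {g : A → Path (HoFib.pt r hr) (HoFib.pt r hr)} {θ : A → ℝ}
    (hg : Continuous g) (hθ : Continuous θ) :
    Continuous fun a => yv r hr (g a) (θ a) :=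
  (continuous_yv r hr).comp (hg.prodMk hθ)

variable {γ : Path (HoFib.pt r hr) (HoFib.pt r hr)} {θ β : ℝ}

lemma pv_bottom (hβ : β ≤ 0) : pv r hr γ θ β = r (yv r hr γ θ) := by
  rw [pv, clamp_of_nonpos hβ]; exact (γ (clamp θ)).q_zero

lemma pv_top (hβ : 1 ≤ β) : pv r hr γ θ β = x0 := by
  rw [pv, clamp_of_one_le hβ]; exact (γ (clamp θ)).q_one

lemma pv_left (hθ : θ ≤ 0) : pv r hr γ θ β = x0 := by
  rw [pv, clamp_of_nonpos hθ, γ.source]; rfl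

lemma pv_right (hθ : 1 ≤ θ) : pv r hr γ θ β = x0 := by
  rw [pv, clamp_of_one_le hθ, γ.target]; rfl

lemma yv_left (hθ : θ ≤ 0) : yv r hr γ θ = y0 := by
  rw [yv, clamp_of_nonpos hθ, γ.source]; rfl

lemma yv_right (hθ : 1 ≤ θ) : yv r hr γ θ = y0 := by
  rw [yv, clamp_of_one_le hθ, γ.target]; rfl

lemma pv_coe (t s : I) : pv r hr γ ↑t ↑s = (γ t).q s := by rw [pv, clamp_coe, clamp_coe]

lemma yv_coe (t : I) : yv r hr γ ↑t = (γ t).xpt := by rw [yv, clamp_coe]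

lemma yv_max0 : yv r hr γ (max 0 θ) = yv r hr γ θ := by
  unfold yv; rw [clamp_max0]

lemma pv_refl : pv r hr (Path.refl _) θ β = x0 := rfl

lemma yv_refl : yv r hr (Path.refl _) θ = y0 := rfl

end Geometry

/-! ## The map φ : HoFib f y0 → Ω HoFib r x0 -/

section Phi
variable {X Y : Type*} [TopologicalSpace X] [TopologicalSpace Y]

open HoFibAux

variable (f : C(X,Y)) (r : C(Y,X)) (x0 : X) (y0 : Y)

def phiP : C((HoFib f y0 × I) × I, X) :=
  ⟨fun p => r (p.1.1.q (clamp (|2*(p.1.2:ℝ) - 1| + p.2))), by fun_prop⟩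

variable {x0 y0} in
def phiY (hrf : ∀ z, r (f z) = z) : C(HoFib f y0 × I, Y) :=
  ⟨fun p => if 2*(p.2:ℝ) ≤ 1
      then f (r (p.1.q (clamp (1 - 2*(p.2:ℝ)))))
      else p.1.q (clamp (2*(p.2:ℝ) - 1)), by
    apply Continuous.if_le (by fun_prop) (by fun_prop) (by fun_prop) continuous_const
    intro p hp
    have h1 : (1 : ℝ) - 2*(p.2:ℝ) = 0 := by linarith
    have h2 : 2*(p.2:ℝ) - 1 = 0 := by linarith
    rw [h1, h2, clamp_of_nonpos le_rfl, p.1.q_zero, hrf]⟩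

variable {x0 y0} in
def phiG (hf : f x0 = y0) (hr : r y0 = x0) (hrf : ∀ z, r (f z) = z) :
    C(HoFib f y0 × I, HoFib r x0) :=
  mkHoFibMap r x0 (phiY f r hrf) (phiP f r y0)
    (by
      rintro ⟨w, t⟩
      show r (w.q (clamp (|2*(t:ℝ) - 1| + ((0:I):ℝ)))) = r (phiY f r hrf (w, t))
      rw [show |2*(t:ℝ) - 1| + ((0:I):ℝ) = |2*(t:ℝ) - 1| by norm_num]
      show _ = r (if 2*(t:ℝ) ≤ 1 then _ else _)
      by_cases h : 2*(t:ℝ) ≤ 1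
      · rw [if_pos h, hrf, abs_of_nonpos (by linarith),
          show -(2*(t:ℝ) - 1) = 1 - 2*(t:ℝ) by ring]
      · rw [if_neg h, abs_of_nonneg (by linarith)])
    (by
      rintro ⟨w, t⟩
      show r (w.q (clamp (|2*(t:ℝ) - 1| + ((1:I):ℝ)))) = x0
      rw [clamp_of_one_le (by
        have h := abs_nonneg (2*(t:ℝ) - 1)
        simp only [Set.Icc.coe_one]
        linarith), w.q_one, hr])

variable {x0 y0} in
def phi (hf : f x0 = y0) (hr : r y0 = x0) (hrf : ∀ z, r (f z) = z) :
    C(HoFib f y0, Path (HoFib.pt r hr) (HoFib.pt r hr)) :=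
  mkPathMap (phiG f r hf hr hrf)
    (by
      intro w
      apply HoFib.ext'
      · show phiY f r hrf (w, 0) = y0
        show (if 2*((0:I):ℝ) ≤ 1 then _ else _) = y0
        rw [if_pos (by norm_num)]
        rw [show (1:ℝ) - 2*((0:I):ℝ) = ((1:I):ℝ) by norm_num, clamp_coe, w.q_one, hr, hf]
      · intro s
        show r (w.q (clamp (|2*((0:I):ℝ) - 1| + s))) = (HoFib.pt r hr).q s
        rw [clamp_of_one_le (by
          have : (0:ℝ) ≤ (s:ℝ) := s.2.1
          norm_num; linarith), w.q_one, hr]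
        rfl)
    (by
      intro w
      apply HoFib.ext'
      · show phiY f r hrf (w, 1) = y0
        show (if 2*((1:I):ℝ) ≤ 1 then _ else _) = y0
        rw [if_neg (by norm_num)]
        rw [show 2*((1:I):ℝ) - 1 = ((1:I):ℝ) by norm_num, clamp_coe, w.q_one]
      · intro s
        show r (w.q (clamp (|2*((1:I):ℝ) - 1| + s))) = (HoFib.pt r hr).q s
        rw [clamp_of_one_le (by
          have : (0:ℝ) ≤ (s:ℝ) := s.2.1
          norm_num; linarith), w.q_one, hr]
        rfl)

variable {x0 y0} in
def psi (hf : f x0 = y0) (hr : r y0 = x0) :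
    C(Path (HoFib.pt r hr) (HoFib.pt r hr), HoFib f y0) :=
  mkHoFibMap f y0 (ContinuousMap.const _ x0)
    ⟨fun p => (p.1 p.2).xpt, by
      exact HoFib.continuous_xpt.comp (by fun_prop)⟩
    (by
      intro γ
      show (γ 0).xpt = f x0
      rw [γ.source, hf]; rfl)
    (by
      intro γ
      show (γ 1).xpt = y0
      rw [γ.target]; rfl)

variable {x0 y0}

lemma phi_pt (hf : f x0 = y0) (hr : r y0 = x0) (hrf : ∀ z, r (f z) = z) :
    phi f r hf hr hrf (HoFib.pt f hf) = Path.refl (HoFib.pt r hr) := by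
  ext t
  apply HoFib.ext'
  · show phiY f r hrf (HoFib.pt f hf, t) = ((Path.refl (HoFib.pt r hr)) t).xpt
    show (if 2*(t:ℝ) ≤ 1 then f (r ((HoFib.pt f hf).q _)) else (HoFib.pt f hf).q _) = _
    split_ifs <;> simp [HoFib.pt_q, hr, hf] <;> rfl
  · intro s
    show r ((HoFib.pt f hf).q _) = ((Path.refl (HoFib.pt r hr)) t).q s
    exact hr

lemma psi_refl (hf : f x0 = y0) (hr : r y0 = x0) :
    psi f r hf hr (Path.refl (HoFib.pt r hr)) = HoFib.pt f hf := by
  apply HoFib.ext'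
  · rfl
  · intro t
    show ((Path.refl (HoFib.pt r hr)) t).xpt = y0
    rfl

end Phi

/-! ## The deformation `id ≃ ψ ∘ φ` on `HoFib f y0` -/

section Hdef
variable {X Y : Type*} [TopologicalSpace X] [TopologicalSpace Y]
variable (f : C(X,Y)) (r : C(Y,X)) {x0 : X} {y0 : Y}

def HdefP (hrf : ∀ z, r (f z) = z) : C((I × HoFib f y0) × I, Y) :=
  ⟨fun p => if 2*(p.2:ℝ) ≤ (p.1.1:ℝ)
      then f (r (p.1.2.q (clamp ((p.1.1:ℝ) - 2*(p.2:ℝ)))))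
      else p.1.2.q (clamp ((2*(p.2:ℝ) - p.1.1)/(2 - p.1.1))), by
    have hdiv : Continuous fun p : (I × HoFib f y0) × I =>
        (2*(p.2:ℝ) - p.1.1)/(2 - (p.1.1:ℝ)) := by
      apply Continuous.div (by fun_prop) (by fun_prop)
      intro p hc
      have : (p.1.1:ℝ) ≤ 1 := p.1.1.2.2
      linarith
    apply Continuous.if_le (by fun_prop)
      ((HoFib.continuous_q.comp (by fun_prop)).eval (continuous_clamp.comp hdiv))
      (by fun_prop) (by fun_prop)
    intro p hp
    have h1 : (p.1.1:ℝ) - 2*(p.2:ℝ) = 0 := by linarith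
    have h2 : (2*(p.2:ℝ) - p.1.1)/(2 - (p.1.1:ℝ)) = 0 := by
      rw [show 2*(p.2:ℝ) - p.1.1 = 0 by linarith, zero_div]
    simp only [Function.comp_apply]
    rw [h1, h2, clamp_of_nonpos le_rfl, p.1.2.q_zero, hrf]⟩

def Hdef (hrf : ∀ z, r (f z) = z) : C(I × HoFib f y0, HoFib f y0) :=
  mkHoFibMap f y0 ⟨fun a => r (a.2.q a.1), by fun_prop⟩ (HdefP f r hrf)
    (by
      rintro ⟨u, w⟩
      show (if 2*((0:I):ℝ) ≤ (u:ℝ) then f (r (w.q (clamp ((u:ℝ) - 2*((0:I):ℝ))))) else _)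
        = f (r (w.q u))
      rw [if_pos (by simp only [Set.Icc.coe_zero, mul_zero]; exact u.2.1),
        show (u:ℝ) - 2*((0:I):ℝ) = (u:ℝ) by norm_num, clamp_coe])
    (by
      rintro ⟨u, w⟩
      have hu : (u:ℝ) ≤ 1 := u.2.2
      show (if 2*((1:I):ℝ) ≤ (u:ℝ) then _
        else w.q (clamp ((2*((1:I):ℝ) - u)/(2 - (u:ℝ))))) = y0
      rw [if_neg (by simp only [Set.Icc.coe_one, mul_one]; intro hc; linarith),
        show 2*((1:I):ℝ) - (u:ℝ) = 2 - u by norm_num,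
        div_self (by intro hc; linarith), clamp_of_one_le le_rfl, w.q_one])

lemma Hdef_zero (hrf : ∀ z, r (f z) = z) (w : HoFib f y0) :
    Hdef f r hrf (0, w) = w := by
  apply HoFib.ext'
  · show r (w.q 0) = w.xpt
    rw [w.q_zero, hrf]
  · intro s
    show (if 2*(s:ℝ) ≤ ((0:I):ℝ) then f (r (w.q (clamp (((0:I):ℝ) - 2*(s:ℝ)))))
      else w.q (clamp ((2*(s:ℝ) - (0:I))/(2 - ((0:I):ℝ))))) = w.q s
    have hs0 : (0:ℝ) ≤ (s:ℝ) := s.2.1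
    by_cases h : 2*(s:ℝ) ≤ ((0:I):ℝ)
    · have hs : (s:ℝ) = 0 := by
        simp only [Set.Icc.coe_zero] at h; linarith
      rw [if_pos h, show ((0:I):ℝ) - 2*(s:ℝ) = 0 by rw [hs]; norm_num,
        clamp_of_nonpos le_rfl, w.q_zero, hrf,
        show s = (0:I) from Subtype.ext hs, w.q_zero]
    · rw [if_neg h, show (2*(s:ℝ) - (0:I))/(2 - ((0:I):ℝ)) = (s:ℝ) by
        simp only [Set.Icc.coe_zero]; ring, clamp_coe]

lemma Hdef_one (hf : f x0 = y0) (hr : r y0 = x0) (hrf : ∀ z, r (f z) = z) (w : HoFib f y0) :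
    Hdef f r hrf (1, w) = (psi f r hf hr).comp (phi f r hf hr hrf) w := by
  apply HoFib.ext'
  · show r (w.q 1) = x0
    rw [w.q_one, hr]
  · intro s
    show (if 2*(s:ℝ) ≤ ((1:I):ℝ) then f (r (w.q (clamp (((1:I):ℝ) - 2*(s:ℝ)))))
      else w.q (clamp ((2*(s:ℝ) - (1:I))/(2 - ((1:I):ℝ)))))
      = ((phi f r hf hr hrf w) s).xpt
    show _ = phiY f r hrf (w, s)
    show _ = (if 2*(s:ℝ) ≤ 1 then f (r (w.q (clamp (1 - 2*(s:ℝ)))))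
      else w.q (clamp (2*(s:ℝ) - 1)))
    simp only [Set.Icc.coe_one]
    by_cases h : 2*(s:ℝ) ≤ 1
    · rw [if_pos h, if_pos h]
    · rw [if_neg h, if_neg h, show (2*(s:ℝ) - 1)/(2 - 1) = 2*(s:ℝ) - 1 by norm_num]

lemma Hdef_pt (hf : f x0 = y0) (hrf : ∀ z, r (f z) = z) (u : I) :
    Hdef f r hrf (u, HoFib.pt f hf) = HoFib.pt f hf := by
  have hry : r y0 = x0 := by rw [← hf, hrf]
  apply HoFib.ext'
  · show r ((HoFib.pt f hf).q u) = x0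
    exact hry
  · intro s
    show (if 2*(s:ℝ) ≤ (u:ℝ) then f (r ((HoFib.pt f hf).q _)) else (HoFib.pt f hf).q _)
      = (HoFib.pt f hf).q s
    split_ifs
    · show f (r y0) = y0
      rw [hry, hf]
    · rfl

end Hdef

/-! ## The deformation `id ≃ φ ∘ ψ` on the loop space -/

section Kdef
variable {X Y : Type*} [TopologicalSpace X] [TopologicalSpace Y]
variable (f : C(X,Y)) (r : C(Y,X)) {x0 : X} {y0 : Y}

open HoFibAux

def KY (hf : f x0 = y0) (hr : r y0 = x0) :
    C((I × Path (HoFib.pt r hr) (HoFib.pt r hr)) × I, Y) :=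
  ⟨fun p =>
    if 2*(p.1.1:ℝ) ≤ 1 then yv r hr p.1.2 (mm p.1.1 p.2)
    else if 2*(p.2:ℝ) ≤ 1 then f (pv r hr p.1.2 (AA p.1.1 p.2 0) (BB p.1.1 p.2 0))
    else yv r hr p.1.2 (cc p.2), by
    apply Continuous.if_le (yv_comp r hr (by fun_prop) (mm_comp (by fun_prop) (by fun_prop)))
      ?_ (by fun_prop) continuous_const ?_
    · -- inner if continuous
      apply Continuous.if_le
        ((map_continuous f).comp (pv_comp r hr (by fun_prop)
          (AA_comp (by fun_prop) (by fun_prop) continuous_const)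
          (BB_comp (by fun_prop) (by fun_prop) continuous_const)))
        (yv_comp r hr (by fun_prop) (continuous_cc.comp (by fun_prop)))
        (by fun_prop) continuous_const
      -- inner boundary 2t = 1
      intro p hp
      have hll : ll (p.2:ℝ) = 0 := ll_eq_zero (le_of_eq hp.symm)
      have hcc : cc (p.2:ℝ) = 0 := cc_eq_zero (le_of_eq hp)
      have hA : AA (p.1.1:ℝ) p.2 0 ≤ 0 := by
        rw [show AA (p.1.1:ℝ) p.2 0
          = cc (p.2:ℝ) + ll (p.2:ℝ) * th (uu p.1.1) + zeta (uu p.1.1) * 0 from rfl,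
          hll, hcc]; ring_nf; exact le_rfl
      simp only [Function.comp_apply]
      rw [pv_left r _ hA, hf, show (cc (p.2:ℝ)) = 0 from hcc, yv_left r _ le_rfl]
    · -- outer boundary 2w = 1
      intro p hp
      have hu : uu (p.1.1:ℝ) = 0 := uu_eq_zero (le_of_eq hp)
      have hmm : mm (p.1.1:ℝ) p.2 = cc (p.2:ℝ) := mm_eq_cc (le_of_eq hp.symm) _
      try simp only [Function.comp_apply]
      by_cases ht : 2*(p.2:ℝ) ≤ 1
      · rw [if_pos ht, hmm, AA_u0 hu, cc_eq_zero ht, yv_left r _ le_rfl,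
          pv_left r _ le_rfl, hf]
      · rw [if_neg ht, hmm]⟩

def KP (hr : r y0 = x0) :
    C(((I × Path (HoFib.pt r hr) (HoFib.pt r hr)) × I) × I, X) :=
  ⟨fun p =>
    if 2*(p.1.1.1:ℝ) ≤ 1 then pv r hr p.1.1.2 (mm p.1.1.1 p.1.2) p.2
    else pv r hr p.1.1.2 (AA p.1.1.1 p.1.2 p.2) (BB p.1.1.1 p.1.2 p.2), by
    apply Continuous.if_le
      (pv_comp r hr (by fun_prop) (mm_comp (by fun_prop) (by fun_prop)) (by fun_prop))
      (pv_comp r hr (by fun_prop)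
        (AA_comp (by fun_prop) (by fun_prop) (by fun_prop))
        (BB_comp (by fun_prop) (by fun_prop) (by fun_prop)))
      (by fun_prop) continuous_const
    intro p hp
    have hu : uu (p.1.1.1:ℝ) = 0 := uu_eq_zero (le_of_eq hp)
    try simp only [Function.comp_apply]
    rw [mm_eq_cc (le_of_eq hp.symm), AA_u0 hu, BB_u0 hu]⟩

def KG (hf : f x0 = y0) (hr : r y0 = x0) (hrf : ∀ z, r (f z) = z) :
    C((I × Path (HoFib.pt r hr) (HoFib.pt r hr)) × I, HoFib r x0) :=
  mkHoFibMap r x0 (KY f r hf hr) (KP r hr)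
    (by
      rintro ⟨⟨w, γ⟩, t⟩
      show (if 2*(w:ℝ) ≤ 1 then pv r hr γ (mm w t) ((0:I):ℝ)
          else pv r hr γ (AA w t ((0:I):ℝ)) (BB w t ((0:I):ℝ)))
        = r (if 2*(w:ℝ) ≤ 1 then yv r hr γ (mm w t)
          else if 2*(t:ℝ) ≤ 1 then f (pv r hr γ (AA w t 0) (BB w t 0))
          else yv r hr γ (cc t))
      simp only [Set.Icc.coe_zero]
      by_cases hw : 2*(w:ℝ) ≤ 1
      · rw [if_pos hw, if_pos hw, pv_bottom r _ le_rfl]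
      · rw [if_neg hw, if_neg hw]
        by_cases ht : 2*(t:ℝ) ≤ 1
        · rw [if_pos ht, hrf]
        · have hll : ll (t:ℝ) = 0 := ll_eq_zero (le_of_not_ge ht)
          have hA : AA (w:ℝ) t 0 = cc (t:ℝ) := by
            rw [show AA (w:ℝ) t 0
              = cc (t:ℝ) + ll (t:ℝ) * th (uu w) + zeta (uu w) * 0 from rfl, hll]; ring
          have hB : BB (w:ℝ) t 0 = 0 := by
            rw [show BB (w:ℝ) t 0
              = eta (uu w) * (0 + (1 - 0) * (ll (t:ℝ) * nu (uu w))) from rfl, hll]; ring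
          rw [if_neg ht, hA, hB, pv_bottom r _ le_rfl])
    (by
      rintro ⟨⟨w, γ⟩, t⟩
      show (if 2*(w:ℝ) ≤ 1 then pv r hr γ (mm w t) ((1:I):ℝ)
          else pv r hr γ (AA w t ((1:I):ℝ)) (BB w t ((1:I):ℝ))) = x0
      simp only [Set.Icc.coe_one]
      by_cases hw : 2*(w:ℝ) ≤ 1
      · rw [if_pos hw, pv_top r _ le_rfl]
      · rw [if_neg hw]
        have hu0 : (0:ℝ) ≤ uu w := uu_nonneg
        have hu1 : uu (w:ℝ) ≤ 1 := uu_mem w.2.1 w.2.2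
        by_cases hu : uu (w:ℝ) ≤ 3/4
        · rw [show BB (w:ℝ) t 1 = 1 by rw [BB_s1, eta_eq_one hu], pv_top r _ le_rfl]
        · have hz : zeta (uu (w:ℝ)) = 1 := zeta_eq_one (by linarith)
          have hA : (1:ℝ) ≤ AA (w:ℝ) t 1 := by
            rw [show AA (w:ℝ) t 1
              = cc (t:ℝ) + ll (t:ℝ) * th (uu w) + zeta (uu w) * 1 from rfl, hz]
            have h1 := cc_nonneg (t := (t:ℝ))
            have h2 := ll_nonneg (t := (t:ℝ))
            have h3 := th_nonneg (u := uu (w:ℝ))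
            nlinarith
          rw [pv_right r _ hA])

def Kmap (hf : f x0 = y0) (hr : r y0 = x0) (hrf : ∀ z, r (f z) = z) :
    C(I × Path (HoFib.pt r hr) (HoFib.pt r hr), Path (HoFib.pt r hr) (HoFib.pt r hr)) :=
  mkPathMap (KG f r hf hr hrf)
    (by
      rintro ⟨w, γ⟩
      have hw0 : (0:ℝ) ≤ (w:ℝ) := w.2.1
      have hu0 : (0:ℝ) ≤ uu w := uu_nonneg
      have hu1 : uu (w:ℝ) ≤ 1 := uu_mem w.2.1 w.2.2
      apply HoFib.ext'
      · show (if 2*(w:ℝ) ≤ 1 then yv r hr γ (mm w ((0:I):ℝ))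
          else if 2*(((0:I)):ℝ) ≤ 1 then f (pv r hr γ (AA w ((0:I):ℝ) 0) (BB w ((0:I):ℝ) 0))
          else yv r hr γ (cc ((0:I):ℝ))) = (HoFib.pt r hr).xpt
        simp only [Set.Icc.coe_zero]
        by_cases hw : 2*(w:ℝ) ≤ 1
        · rw [if_pos hw, mm_t_zero hw0, yv_left r _ le_rfl]; rfl
        · rw [if_neg hw, if_pos (by norm_num)]
          have hA0 : AA (w:ℝ) 0 0 = th (uu w) := by
            rw [show AA (w:ℝ) 0 0
              = cc 0 + ll 0 * th (uu w) + zeta (uu w) * 0 from rfl, cc_zero, ll_zero]; ring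
          have hB0 : BB (w:ℝ) 0 0 = eta (uu w) * nu (uu w) := by
            rw [show BB (w:ℝ) 0 0
              = eta (uu w) * (0 + (1 - 0) * (ll 0 * nu (uu w))) from rfl, ll_zero]; ring
          by_cases hu2 : uu (w:ℝ) ≤ 1/2
          · rw [hA0, th_eq_zero hu2, pv_left r _ le_rfl, hf]; rfl
          · by_cases hu3 : uu (w:ℝ) ≤ 3/4
            · rw [show BB (w:ℝ) 0 0 = 1 by
                rw [hB0, eta_eq_one hu3, nu_eq_one (by linarith)]; ring,
                pv_top r _ le_rfl, hf]; rfl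
            · rw [hA0, th_eq_one (by linarith), pv_right r _ le_rfl, hf]; rfl
      · intro s
        have hs0 : (0:ℝ) ≤ (s:ℝ) := s.2.1
        show (if 2*(w:ℝ) ≤ 1 then pv r hr γ (mm w ((0:I):ℝ)) (s:ℝ)
          else pv r hr γ (AA w ((0:I):ℝ) s) (BB w ((0:I):ℝ) s)) = (HoFib.pt r hr).q s
        simp only [Set.Icc.coe_zero]
        by_cases hw : 2*(w:ℝ) ≤ 1
        · rw [if_pos hw, mm_t_zero hw0, pv_left r _ le_rfl]; rfl
        · rw [if_neg hw]
          have hA0 : AA (w:ℝ) 0 s = th (uu w) + zeta (uu w) * s := by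
            rw [show AA (w:ℝ) 0 s
              = cc 0 + ll 0 * th (uu w) + zeta (uu w) * s from rfl, cc_zero, ll_zero]; ring
          have hB0 : BB (w:ℝ) 0 s = eta (uu w) * (s + (1 - s) * nu (uu w)) := by
            rw [show BB (w:ℝ) 0 s
              = eta (uu w) * (s + (1 - s) * (ll 0 * nu (uu w))) from rfl, ll_zero]; ring
          by_cases hu2 : uu (w:ℝ) ≤ 1/4
          · rw [show AA (w:ℝ) 0 s = 0 by
              rw [hA0, th_eq_zero (by linarith), zeta_eq_zero hu2]; ring,
              pv_left r _ le_rfl]; rfl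
          · by_cases hu3 : uu (w:ℝ) ≤ 3/4
            · rw [show BB (w:ℝ) 0 s = 1 by
                rw [hB0, eta_eq_one hu3, nu_eq_one (by linarith)]; ring,
                pv_top r _ le_rfl]; rfl
            · have hA1 : (1:ℝ) ≤ AA (w:ℝ) 0 s := by
                rw [hA0, th_eq_one (by linarith)]
                have h3 := zeta_nonneg (u := uu (w:ℝ))
                nlinarith
              rw [pv_right r _ hA1]; rfl)
    (by
      rintro ⟨w, γ⟩
      apply HoFib.ext'
      · show (if 2*(w:ℝ) ≤ 1 then yv r hr γ (mm w ((1:I):ℝ))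
          else if 2*(((1:I)):ℝ) ≤ 1 then f (pv r hr γ (AA w ((1:I):ℝ) 0) (BB w ((1:I):ℝ) 0))
          else yv r hr γ (cc ((1:I):ℝ))) = (HoFib.pt r hr).xpt
        simp only [Set.Icc.coe_one]
        by_cases hw : 2*(w:ℝ) ≤ 1
        · rw [if_pos hw, mm_t_one, yv_right r _ le_rfl]; rfl
        · rw [if_neg hw, if_neg (by norm_num), cc_one, yv_right r _ le_rfl]; rfl
      · intro s
        show (if 2*(w:ℝ) ≤ 1 then pv r hr γ (mm w ((1:I):ℝ)) (s:ℝ)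
          else pv r hr γ (AA w ((1:I):ℝ) s) (BB w ((1:I):ℝ) s)) = (HoFib.pt r hr).q s
        simp only [Set.Icc.coe_one]
        by_cases hw : 2*(w:ℝ) ≤ 1
        · rw [if_pos hw, mm_t_one, pv_right r _ le_rfl]; rfl
        · have hA1 : (1:ℝ) ≤ AA (w:ℝ) 1 s := by
            rw [show AA (w:ℝ) 1 s
              = cc 1 + ll 1 * th (uu w) + zeta (uu w) * s from rfl, cc_one, ll_one]
            have h3 := zeta_nonneg (u := uu (w:ℝ))
            have hs0 : (0:ℝ) ≤ (s:ℝ) := s.2.1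
            nlinarith
          rw [if_neg hw, pv_right r _ hA1]; rfl)

lemma K_zero (hf : f x0 = y0) (hr : r y0 = x0) (hrf : ∀ z, r (f z) = z)
    (γ : Path (HoFib.pt r hr) (HoFib.pt r hr)) :
    Kmap f r hf hr hrf (0, γ) = γ := by
  ext t
  apply HoFib.ext'
  · show (if 2*(((0:I)):ℝ) ≤ 1 then yv r hr γ (mm ((0:I):ℝ) t)
      else _) = (γ t).xpt
    rw [if_pos (by norm_num), show ((0:I):ℝ) = 0 from rfl, mm_w_zero t.2.1, yv_coe]
  · intro s
    show (if 2*(((0:I)):ℝ) ≤ 1 then pv r hr γ (mm ((0:I):ℝ) t) (s:ℝ)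
      else _) = (γ t).q s
    rw [if_pos (by norm_num), show ((0:I):ℝ) = 0 from rfl, mm_w_zero t.2.1, pv_coe]

lemma K_one (hf : f x0 = y0) (hr : r y0 = x0) (hrf : ∀ z, r (f z) = z)
    (γ : Path (HoFib.pt r hr) (HoFib.pt r hr)) :
    Kmap f r hf hr hrf (1, γ) = (phi f r hf hr hrf).comp (psi f r hf hr) γ := by
  have huo : uu ((1:I):ℝ) = 1 := by rw [Set.Icc.coe_one, uu_one]
  ext t
  apply HoFib.ext'
  · show (if 2*(((1:I)):ℝ) ≤ 1 then yv r hr γ (mm ((1:I):ℝ) t)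
      else if 2*(t:ℝ) ≤ 1 then f (pv r hr γ (AA ((1:I):ℝ) t 0) (BB ((1:I):ℝ) t 0))
      else yv r hr γ (cc t)) = phiY f r hrf (psi f r hf hr γ, t)
    rw [if_neg (by norm_num)]
    show _ = (if 2*(t:ℝ) ≤ 1 then f (r ((psi f r hf hr γ).q (clamp (1 - 2*(t:ℝ)))))
      else (psi f r hf hr γ).q (clamp (2*(t:ℝ) - 1)))
    by_cases ht : 2*(t:ℝ) ≤ 1
    · rw [if_pos ht, if_pos ht]
      have hB : BB ((1:I):ℝ) t 0 = 0 := by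
        rw [show BB ((1:I):ℝ) t 0
          = eta (uu ((1:I):ℝ)) * (0 + (1 - 0) * (ll (t:ℝ) * nu (uu ((1:I):ℝ)))) from rfl,
          huo, eta_one]; ring
      have hA : AA ((1:I):ℝ) t 0 = 1 - 2*(t:ℝ) := by
        rw [show AA ((1:I):ℝ) t 0
          = cc (t:ℝ) + ll (t:ℝ) * th (uu ((1:I):ℝ)) + zeta (uu ((1:I):ℝ)) * 0 from rfl,
          huo, th_one]
        have := cc_add_ll (t:ℝ)
        rw [abs_of_nonpos (by linarith)] at this
        linarith
      rw [hB, pv_bottom r _ le_rfl, hA]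
      rfl
    · rw [if_neg ht, if_neg ht]
      show yv r hr γ (max 0 (2*(t:ℝ) - 1)) = _
      rw [yv_max0]
      rfl
  · intro s
    show (if 2*(((1:I)):ℝ) ≤ 1 then pv r hr γ (mm ((1:I):ℝ) t) (s:ℝ)
      else pv r hr γ (AA ((1:I):ℝ) t s) (BB ((1:I):ℝ) t s))
      = r ((psi f r hf hr γ).q (clamp (|2*(t:ℝ) - 1| + s)))
    rw [if_neg (by norm_num)]
    have hB : BB ((1:I):ℝ) t s = 0 := by
      rw [show BB ((1:I):ℝ) t s
        = eta (uu ((1:I):ℝ)) * (s + (1 - s) * (ll (t:ℝ) * nu (uu ((1:I):ℝ)))) from rfl,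
        huo, eta_one]; ring
    have hA : AA ((1:I):ℝ) t s = |2*(t:ℝ) - 1| + s := by
      rw [show AA ((1:I):ℝ) t s
        = cc (t:ℝ) + ll (t:ℝ) * th (uu ((1:I):ℝ)) + zeta (uu ((1:I):ℝ)) * s from rfl,
        huo, th_one, zeta_one, ← cc_add_ll (t:ℝ)]
      ring
    rw [hB, pv_bottom r _ le_rfl, hA]
    rfl

lemma K_pt (hf : f x0 = y0) (hr : r y0 = x0) (hrf : ∀ z, r (f z) = z) (u : I) :
    Kmap f r hf hr hrf (u, Path.refl (HoFib.pt r hr)) = Path.refl (HoFib.pt r hr) := by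
  ext t
  apply HoFib.ext'
  · show (if 2*((u:I):ℝ) ≤ 1 then yv r hr (Path.refl _) (mm (u:ℝ) t)
      else if 2*(t:ℝ) ≤ 1 then f (pv r hr (Path.refl _) (AA (u:ℝ) t 0) (BB (u:ℝ) t 0))
      else yv r hr (Path.refl _) (cc t)) = (Path.refl (HoFib.pt r hr) t).xpt
    split_ifs
    · rfl
    · exact hf
    · rfl
  · intro s
    show (if 2*((u:I):ℝ) ≤ 1 then pv r hr (Path.refl _) (mm (u:ℝ) t) (s:ℝ)
      else pv r hr (Path.refl _) (AA (u:ℝ) t s) (BB (u:ℝ) t s))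
      = (Path.refl (HoFib.pt r hr) t).q s
    split_ifs <;> rfl

end Kdef

/-! ## Main lemma and the theorem -/

section MainLemma
variable {X Y : Type*} [TopologicalSpace X] [TopologicalSpace Y]

lemma weaklyEquivalentTo_hofib (f : C(X,Y)) (r : C(Y,X)) {x0 : X} {y0 : Y}
    (hf : f x0 = y0) (hr : r y0 = x0) (hrf : ∀ z, r (f z) = z) :
    WeaklyEquivalentTo (HoFib f y0) (HoFib.pt f hf)
      (Path (HoFib.pt r hr) (HoFib.pt r hr)) (Path.refl (HoFib.pt r hr)) := by
  refine ⟨phi f r hf hr hrf, phi_pt f r hf hr hrf, fun n => ?_⟩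
  have hbij1 : Function.Bijective
      (piMap n ((psi f r hf hr).comp (phi f r hf hr hrf)) (HoFib.pt f hf)) := by
    apply bijective_piMap_of_deform n _ _ (Hdef f r hrf)
    · exact Hdef_zero f r hrf
    · exact Hdef_one f r hf hr hrf
    · exact fun t => Hdef_pt f r hf hrf t
  have hbij2 : Function.Bijective
      (piMap n ((phi f r hf hr hrf).comp (psi f r hf hr))
        (phi f r hf hr hrf (HoFib.pt f hf))) := by
    apply bijective_piMap_of_deform n _ _ (Kmap f r hf hr hrf)
    · exact K_zero f r hf hr hrf
    · exact K_one f r hf hr hrf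
    · intro u
      rw [phi_pt f r hf hr hrf]
      exact K_pt f r hf hr hrf u
  constructor
  · intro a b hab
    apply hbij1.1
    rw [piMap_comp, piMap_comp, hab]
  · have h2 : Function.Surjective
        (piMap n (phi f r hf hr hrf)
          (psi f r hf hr (phi f r hf hr hrf (HoFib.pt f hf)))) := by
      intro b
      obtain ⟨a, ha⟩ := hbij2.2 b
      rw [piMap_comp] at ha
      exact ⟨_, ha⟩
    apply piMap_surjective_congr n _ _ h2
    rw [phi_pt f r hf hr hrf, psi_refl f r hf hr]

end MainLemma


/-- the cosimplicial identities `s⁰ ∘ d⁰ = id = s⁰ ∘ d¹` force the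
homotopy fibers of `d⁰` and `d¹` to both be weakly equivalent to `Ω hofib(s⁰)`,
and in particular to have isomorphic homotopy groups in each degree. -/
theorem statement3 {Z0 Z1 : Type*} [TopologicalSpace Z0] [TopologicalSpace Z1]
    (z0 : Z0) (z1 : Z1) (d0 d1 : C(Z0, Z1)) (s0 : C(Z1, Z0))
    (hd0 : d0 z0 = z1) (hd1 : d1 z0 = z1) (hs0 : s0 z1 = z0)
    (h0 : ∀ x : Z0, s0 (d0 x) = x) (h1 : ∀ x : Z0, s0 (d1 x) = x) :
    WeaklyEquivalentTo (HoFib d0 z1) (HoFib.pt d0 hd0)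
      (Path (HoFib.pt s0 hs0) (HoFib.pt s0 hs0)) (Path.refl (HoFib.pt s0 hs0)) ∧
    WeaklyEquivalentTo (HoFib d1 z1) (HoFib.pt d1 hd1)
      (Path (HoFib.pt s0 hs0) (HoFib.pt s0 hs0)) (Path.refl (HoFib.pt s0 hs0)) ∧
    ∀ n : ℕ, Nonempty
      (HomotopyGroup.Pi n (HoFib d0 z1) (HoFib.pt d0 hd0) ≃
        HomotopyGroup.Pi n (HoFib d1 z1) (HoFib.pt d1 hd1)) := by
  have main0 := weaklyEquivalentTo_hofib d0 s0 hd0 hs0 h0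
  have main1 := weaklyEquivalentTo_hofib d1 s0 hd1 hs0 h1
  refine ⟨main0, main1, fun n => ?_⟩
  obtain ⟨f0, hf0, hb0⟩ := main0
  obtain ⟨f1, hf1, hb1⟩ := main1
  exact ⟨(Equiv.ofBijective _ (hb0 n)).trans
    ((Equiv.cast (by rw [hf0, hf1])).trans (Equiv.ofBijective _ (hb1 n)).symm)⟩

end
end

section
/- The inclusion Δ_res ⊆ Δ of the restricted simplex category (injective order-preserving maps only) into the simplex category is left cofinal (initial). -/
/-!
STATEMENT 7: The inclusion Δ_res ⊆ Δ of the restricted simplex category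
(injective order-preserving maps only) into the simplex category is left
cofinal (initial).
-/

open CategoryTheory
open Simplicial

/-- The restricted simplex category `Δ_res`: the wide subcategory of the
simplex category whose morphisms are the monomorphisms (equivalently the
strictly monotone maps). -/
def DeltaRes : Type :=
  WideSubcategory (MorphismProperty.monomorphisms SimplexCategory)

instance : Category DeltaRes :=
  inferInstanceAs
    (Category (WideSubcategory (MorphismProperty.monomorphisms SimplexCategory)))

/-- The inclusion functor `Δ_res ⥤ Δ`. -/
def deltaResInclusion : DeltaRes ⥤ SimplexCategory :=
  wideSubcategoryInclusion (MorphismProperty.monomorphisms SimplexCategory)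

/-- Every morphism out of `[0]` is a monomorphism. -/
lemma mono_of_src_zero {x : SimplexCategory} (f : (⦋0⦌ : SimplexCategory) ⟶ x) : Mono f := by
  rw [SimplexCategory.mono_iff_injective]
  intro a b _
  apply Fin.ext
  have ha := a.isLt
  have hb := b.isLt
  simp only [SimplexCategory.len_mk] at ha hb
  omega

/-- The inclusion of the restricted simplex category into the simplex category
is left cofinal (initial): every comma category over an object of Δ has
connected nonempty nerve. -/
theorem statement7 : deltaResInclusion.Initial := by
  constructor
  intro d
  -- the "point" objects
  let pt : Fin (d.len + 1) → CostructuredArrow deltaResInclusion d := fun i =>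
    CostructuredArrow.mk (Y := (⟨⦋0⦌⟩ : DeltaRes))
      (show deltaResInclusion.obj ⟨⦋0⦌⟩ ⟶ d from SimplexCategory.const ⦋0⦌ d i)
  have hne : Nonempty (CostructuredArrow deltaResInclusion d) := ⟨pt 0⟩
  -- every object is connected to a point
  have hpt : ∀ j : CostructuredArrow deltaResInclusion d,
      Zigzag (pt (j.hom.toOrderHom 0)) j := by
    intro j
    refine Relation.ReflTransGen.single (Or.inl ⟨?_⟩)
    refine CostructuredArrow.homMk
      ⟨SimplexCategory.const ⦋0⦌ j.left.obj 0, mono_of_src_zero _⟩ ?_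
    exact SimplexCategory.Hom.ext_zero_left _ _ rfl
  -- every point is connected to the point 0
  have hpt0 : ∀ i : Fin (d.len + 1), Zigzag (pt i) (pt 0) := by
    intro i
    -- the edge [1] ⟶ d sending 0 ↦ 0, 1 ↦ i
    let m : (⦋1⦌ : SimplexCategory) ⟶ d :=
      SimplexCategory.Hom.mk ⟨fun x => if x = 0 then 0 else i, by
        intro a b hab
        dsimp only
        split_ifs with ha hb hb
        · exact le_refl _
        · exact Fin.zero_le _
        · exact absurd (Fin.le_zero_iff.mp (hb ▸ hab)) ha
        · exact le_refl _⟩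
    let e : CostructuredArrow deltaResInclusion d :=
      CostructuredArrow.mk (Y := (⟨⦋1⦌⟩ : DeltaRes))
        (show deltaResInclusion.obj ⟨⦋1⦌⟩ ⟶ d from m)
    have h1 : Zag (pt i) e := by
      refine Or.inl ⟨CostructuredArrow.homMk
        ⟨SimplexCategory.const ⦋0⦌ ⦋1⦌ 1, mono_of_src_zero _⟩ ?_⟩
      apply SimplexCategory.Hom.ext_zero_left
      show (if (1 : Fin 2) = 0 then (0 : Fin (d.len + 1)) else i) = i
      simp
    have h2 : Zag (pt 0) e := by
      refine Or.inl ⟨CostructuredArrow.homMk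
        ⟨SimplexCategory.const ⦋0⦌ ⦋1⦌ 0, mono_of_src_zero _⟩ ?_⟩
      exact SimplexCategory.Hom.ext_zero_left _ _ rfl
    exact (Relation.ReflTransGen.single h1).trans
      (Relation.ReflTransGen.single h2.symm)
  have : ∀ j₁ j₂ : CostructuredArrow deltaResInclusion d, Zigzag j₁ j₂ := by
    intro j₁ j₂
    exact ((zigzag_symmetric.symm _ _ (hpt j₁)).trans (hpt0 _)).trans
      ((zigzag_symmetric.symm _ _ (hpt0 _)).trans (hpt j₂))
  exact zigzag_isConnected this
end
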